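/- arXiv:1408.4103 — 5 statements merged into one kernel-verified Lean document; each statement's English description precedes it below -/
import Mathlib

section
/- Under the assumptions on b and for σ ≠ 0, the integrals ∫₀ᵘ (v σ²)/(2 B(v)) dv and ∫ᵤ¹ ((1-v) σ²)/(2 B(v)) dv are finite for every u ∈ (0,1), so that Φ(u) := ∫₀ᵘ (v σ²)/(2 B(v)) dv − ∫ᵤ¹ ((1-v) σ²)/(2 B(v)) dv is well defined. -/
open MeasureTheory Set intervalIntegral Filter

private lemma auxInt (b : ℝ → ℝ) (hcont : ContinuousOn b (Set.Icc 0 1)) {x y : ℝ}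
    (hx : x ∈ Set.Icc (0:ℝ) 1) (hy : y ∈ Set.Icc (0:ℝ) 1) :
    IntervalIntegrable b volume x y :=
  (hcont.mono (Set.uIcc_subset_Icc hx hy)).intervalIntegrable

private lemma b0pos (b : ℝ → ℝ) (hcont : ContinuousOn b (Set.Icc 0 1))
    (hanti : StrictAntiOn b (Set.Icc 0 1))
    (hB1 : ∫ v in (0:ℝ)..1, b v = 0) : 0 < b 0 := by
  have hInt : IntervalIntegrable b volume 0 1 :=
    auxInt b hcont (Set.left_mem_Icc.2 zero_le_one) (Set.right_mem_Icc.2 zero_le_one)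
  have h : 0 < ∫ w in (0:ℝ)..1, (b 0 - b w) := by
    apply intervalIntegral.intervalIntegral_pos_of_pos_on
    · exact (_root_.intervalIntegrable_const).sub hInt
    · intro x hx
      have := hanti (Set.left_mem_Icc.2 zero_le_one) ⟨hx.1.le, hx.2.le⟩ hx.1
      linarith
    · exact one_pos
  rw [intervalIntegral.integral_sub _root_.intervalIntegrable_const hInt, hB1] at h
  simpa using h

private lemma b1neg (b : ℝ → ℝ) (hcont : ContinuousOn b (Set.Icc 0 1))
    (hanti : StrictAntiOn b (Set.Icc 0 1))
    (hB1 : ∫ v in (0:ℝ)..1, b v = 0) : b 1 < 0 := by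
  have hInt : IntervalIntegrable b volume 0 1 :=
    auxInt b hcont (Set.left_mem_Icc.2 zero_le_one) (Set.right_mem_Icc.2 zero_le_one)
  have h : 0 < ∫ w in (0:ℝ)..1, (b w - b 1) := by
    apply intervalIntegral.intervalIntegral_pos_of_pos_on
    · exact hInt.sub _root_.intervalIntegrable_const
    · intro x hx
      have := hanti ⟨hx.1.le, hx.2.le⟩ (Set.right_mem_Icc.2 zero_le_one) hx.2
      linarith
    · exact one_pos
  rw [intervalIntegral.integral_sub hInt _root_.intervalIntegrable_const, hB1] at h
  simpa using h

/-- lower bound `v * b v ≤ ∫_0^v b`. -/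
private lemma Bv_lb (b : ℝ → ℝ) (hcont : ContinuousOn b (Set.Icc 0 1))
    (hanti : StrictAntiOn b (Set.Icc 0 1)) {v : ℝ} (hv : v ∈ Set.Icc (0:ℝ) 1) :
    v * b v ≤ ∫ w in (0:ℝ)..v, b w := by
  have h : ∫ w in (0:ℝ)..v, b v ≤ ∫ w in (0:ℝ)..v, b w := by
    apply intervalIntegral.integral_mono_on hv.1 _root_.intervalIntegrable_const
      (auxInt b hcont (Set.left_mem_Icc.2 zero_le_one) hv)
    intro w hw
    exact hanti.antitoneOn ⟨hw.1, hw.2.trans hv.2⟩ hv hw.2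
  simpa using h

/-- upper bound `∫_v^1 b ≤ (1 - v) * b v`. -/
private lemma Bv_rb (b : ℝ → ℝ) (hcont : ContinuousOn b (Set.Icc 0 1))
    (hanti : StrictAntiOn b (Set.Icc 0 1)) {v : ℝ} (hv : v ∈ Set.Icc (0:ℝ) 1) :
    (∫ w in v..1, b w) ≤ (1 - v) * b v := by
  have h : ∫ w in v..1, b w ≤ ∫ w in v..1, b v := by
    apply intervalIntegral.integral_mono_on hv.2
      (auxInt b hcont hv (Set.right_mem_Icc.2 zero_le_one)) _root_.intervalIntegrable_const
    intro w hw
    rcases eq_or_lt_of_le hw.1 with h | h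
    · exact le_of_eq (by rw [h])
    · exact (hanti hv ⟨hv.1.trans hw.1, hw.2⟩ h).le
  simpa using h

/-- `B = ∫_0^v b` is positive on `(0,1)`. -/
private lemma Bpos (b : ℝ → ℝ) (hcont : ContinuousOn b (Set.Icc 0 1))
    (hanti : StrictAntiOn b (Set.Icc 0 1))
    (hB1 : ∫ v in (0:ℝ)..1, b v = 0) {v : ℝ} (hv : v ∈ Set.Ioo (0:ℝ) 1) :
    0 < ∫ w in (0:ℝ)..v, b w := by
  have hv' : v ∈ Set.Icc (0:ℝ) 1 := ⟨hv.1.le, hv.2.le⟩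
  rcases lt_or_ge 0 (b v) with h | h
  · calc (0:ℝ) < v * b v := mul_pos hv.1 h
    _ ≤ _ := Bv_lb b hcont hanti hv'
  · have hadd : (∫ w in (0:ℝ)..v, b w) + ∫ w in v..1, b w = 0 := by
      rw [intervalIntegral.integral_add_adjacent_intervals
        (auxInt b hcont (Set.left_mem_Icc.2 zero_le_one) hv')
        (auxInt b hcont hv' (Set.right_mem_Icc.2 zero_le_one)), hB1]
    have hneg : (∫ w in v..1, b w) < 0 := by
      have h2 : 0 < ∫ w in v..1, (b v - b w) := by
        apply intervalIntegral.intervalIntegral_pos_of_pos_on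
        · exact _root_.intervalIntegrable_const.sub
            (auxInt b hcont hv' (Set.right_mem_Icc.2 zero_le_one))
        · intro x hx
          have := hanti hv' ⟨hv.1.le.trans hx.1.le, hx.2.le⟩ hx.1
          linarith
        · exact hv.2
      rw [intervalIntegral.integral_sub _root_.intervalIntegrable_const
        (auxInt b hcont hv' (Set.right_mem_Icc.2 zero_le_one)),
        intervalIntegral.integral_const] at h2
      rw [smul_eq_mul] at h2
      have h3 : (1 - v) * b v ≤ 0 := mul_nonpos_of_nonneg_of_nonpos (by linarith [hv.2]) h
      nlinarith [h2]
    linarith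

theorem stmt_4 (b : ℝ → ℝ) (σ : ℝ) (hσ : σ ≠ 0)
    (hcont : ContinuousOn b (Set.Icc 0 1))
    (hanti : StrictAntiOn b (Set.Icc 0 1))
    (hB1 : ∫ v in (0:ℝ)..1, b v = 0) :
    ∀ u ∈ Set.Ioo (0:ℝ) 1,
      IntervalIntegrable (fun v => v * σ^2 / (2 * ∫ w in (0:ℝ)..v, b w)) MeasureTheory.volume 0 u ∧
      IntervalIntegrable (fun v => (1 - v) * σ^2 / (2 * ∫ w in (0:ℝ)..v, b w)) MeasureTheory.volume u 1 := by
  intro u hu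
  have hb0 : 0 < b 0 := b0pos b hcont hanti hB1
  have hb1 : b 1 < 0 := b1neg b hcont hanti hB1
  have hBcont : ContinuousOn (fun v => ∫ w in (0:ℝ)..v, b w) (Set.Icc 0 1) := by
    have h := intervalIntegral.continuousOn_primitive_interval (a := (0:ℝ)) (b := (1:ℝ))
      (f := b) (μ := volume) ?_
    · simpa using h
    · rw [Set.uIcc_of_le zero_le_one]; exact hcont.integrableOn_Icc
  -- integrability on compact subintervals of (0,1), by continuity
  have hmid : ∀ x y : ℝ, x ∈ Set.Ioo (0:ℝ) 1 → y ∈ Set.Ioo (0:ℝ) 1 → ∀ c : ℝ → ℝ,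
      Continuous c →
      IntervalIntegrable (fun v => c v / (2 * ∫ w in (0:ℝ)..v, b w)) volume x y := by
    intro x y hx hy c hc
    apply ContinuousOn.intervalIntegrable
    have hsub : Set.uIcc x y ⊆ Set.Ioo (0:ℝ) 1 := Set.ordConnected_Ioo.uIcc_subset hx hy
    apply ContinuousOn.div hc.continuousOn
      (continuousOn_const.mul (hBcont.mono (hsub.trans Set.Ioo_subset_Icc_self)))
    intro v hv
    have hp := Bpos b hcont hanti hB1 (hsub hv)
    exact mul_ne_zero two_ne_zero hp.ne'
  constructor
  · -- first integral
    obtain ⟨u₀, hu₀mem, hbu₀⟩ : ∃ u₀ ∈ Set.Ioc (0:ℝ) u, 0 < b u₀ := by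
      have hc0 : ContinuousWithinAt b (Set.Icc 0 1) 0 := hcont 0 ⟨le_refl 0, zero_le_one⟩
      have hev : ∀ᶠ v in nhdsWithin 0 (Set.Icc (0:ℝ) 1), 0 < b v :=
        hc0.eventually (eventually_gt_nhds hb0)
      have hne : (nhdsWithin 0 (Set.Ioc (0:ℝ) u)).NeBot := by
        rw [← mem_closure_iff_nhdsWithin_neBot, closure_Ioc hu.1.ne]
        exact ⟨le_refl 0, hu.1.le⟩
      have hev' : ∀ᶠ v in nhdsWithin 0 (Set.Ioc (0:ℝ) u), 0 < b v :=
        hev.filter_mono (nhdsWithin_mono 0 (show Set.Ioc (0:ℝ) u ⊆ Set.Icc 0 1 from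
          fun x hx => ⟨hx.1.le, hx.2.trans hu.2.le⟩))
      obtain ⟨u₀, h1, h2⟩ := (hev'.and eventually_mem_nhdsWithin).exists
      exact ⟨u₀, h2, h1⟩
    have h1 : IntervalIntegrable (fun v => v * σ^2 / (2 * ∫ w in (0:ℝ)..v, b w))
        volume 0 u₀ := by
      rw [intervalIntegrable_iff_integrableOn_Ioc_of_le hu₀mem.1.le]
      have hsub : Set.Ioc (0:ℝ) u₀ ⊆ Set.Icc 0 1 :=
        fun x hx => ⟨hx.1.le, hx.2.trans (hu₀mem.2.trans hu.2.le)⟩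
      apply MeasureTheory.Integrable.mono' (g := fun _ => σ^2 / (2 * b u₀))
        (integrableOn_const measure_Ioc_lt_top.ne)
      · have hBm : AEMeasurable (fun v => ∫ w in (0:ℝ)..v, b w)
            (volume.restrict (Set.Ioc (0:ℝ) u₀)) :=
          (hBcont.mono hsub).aemeasurable measurableSet_Ioc
        exact (((measurable_id.mul_const (σ^2)).aemeasurable).div
          (hBm.const_mul 2)).aestronglyMeasurable
      · filter_upwards [ae_restrict_mem measurableSet_Ioc] with v hv
        have hv1 : v ∈ Set.Icc (0:ℝ) 1 := hsub hv
        have hu₀1 : u₀ ∈ Set.Icc (0:ℝ) 1 := ⟨hu₀mem.1.le, hu₀mem.2.trans hu.2.le⟩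
        have hbv : b u₀ ≤ b v := hanti.antitoneOn hv1 hu₀1 hv.2
        have hlb : v * b u₀ ≤ ∫ w in (0:ℝ)..v, b w :=
          le_trans (by nlinarith [hv.1]) (Bv_lb b hcont hanti hv1)
        have hvb : (0:ℝ) < v * b u₀ := mul_pos hv.1 hbu₀
        have hBvpos : 0 < ∫ w in (0:ℝ)..v, b w := lt_of_lt_of_le hvb hlb
        rw [Real.norm_eq_abs, abs_of_nonneg (div_nonneg (mul_nonneg hv.1.le (sq_nonneg σ)) (by linarith))]
        calc v * σ^2 / (2 * ∫ w in (0:ℝ)..v, b w) ≤ v * σ^2 / (2 * (v * b u₀)) :=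
              div_le_div_of_nonneg_left (mul_nonneg hv.1.le (sq_nonneg σ)) (by linarith) (by linarith)
          _ = σ^2 / (2 * b u₀) := by
              rw [div_eq_div_iff (by linarith) (by linarith)]
              ring
    refine h1.trans (hmid u₀ u ⟨hu₀mem.1, lt_of_le_of_lt hu₀mem.2 hu.2⟩ hu
      (fun v => v * σ^2) (by continuity))
  · -- second integral
    obtain ⟨u₁, hu₁mem, hbu₁⟩ : ∃ u₁ ∈ Set.Ico u 1, b u₁ < 0 := by
      have hc1 : ContinuousWithinAt b (Set.Icc 0 1) 1 := hcont 1 ⟨zero_le_one, le_refl 1⟩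
      have hev : ∀ᶠ v in nhdsWithin 1 (Set.Icc (0:ℝ) 1), b v < 0 :=
        hc1.eventually (eventually_lt_nhds hb1)
      have hne : (nhdsWithin 1 (Set.Ico u 1)).NeBot := by
        rw [← mem_closure_iff_nhdsWithin_neBot, closure_Ico hu.2.ne]
        exact ⟨hu.2.le, le_refl 1⟩
      have hev' : ∀ᶠ v in nhdsWithin 1 (Set.Ico u 1), b v < 0 :=
        hev.filter_mono (nhdsWithin_mono 1 (show Set.Ico u 1 ⊆ Set.Icc (0:ℝ) 1 from
          fun x hx => ⟨hu.1.le.trans hx.1, hx.2.le⟩))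
      obtain ⟨u₁, h1, h2⟩ := (hev'.and eventually_mem_nhdsWithin).exists
      exact ⟨u₁, h2, h1⟩
    have hu₁1 : u₁ ∈ Set.Icc (0:ℝ) 1 := ⟨hu.1.le.trans hu₁mem.1, hu₁mem.2.le⟩
    have h2 : IntervalIntegrable (fun v => (1 - v) * σ^2 / (2 * ∫ w in (0:ℝ)..v, b w))
        volume u₁ 1 := by
      rw [intervalIntegrable_iff_integrableOn_Ioc_of_le hu₁mem.2.le]
      have hsub : Set.Ioc u₁ 1 ⊆ Set.Icc (0:ℝ) 1 :=
        fun x hx => ⟨hu₁1.1.trans hx.1.le, hx.2⟩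
      apply MeasureTheory.Integrable.mono' (g := fun _ => σ^2 / (2 * (-b u₁)))
        (integrableOn_const measure_Ioc_lt_top.ne)
      · have hBm : AEMeasurable (fun v => ∫ w in (0:ℝ)..v, b w)
            (volume.restrict (Set.Ioc u₁ 1)) :=
          (hBcont.mono hsub).aemeasurable measurableSet_Ioc
        exact ((((measurable_const.sub measurable_id).mul_const (σ^2)).aemeasurable).div
          (hBm.const_mul 2)).aestronglyMeasurable
      · filter_upwards [ae_restrict_mem measurableSet_Ioc] with v hv
        rcases eq_or_lt_of_le hv.2 with heq | hlt
        · rw [heq, hB1]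
          simp only [sub_self, zero_mul, mul_zero, zero_div, norm_zero]
          exact div_nonneg (sq_nonneg σ) (by linarith)
        · have hv1 : v ∈ Set.Icc (0:ℝ) 1 := hsub hv
          have hbv : b v ≤ b u₁ := hanti.antitoneOn hu₁1 hv1 hv.1.le
          have hrb : (∫ w in v..1, b w) ≤ (1 - v) * b u₁ :=
            le_trans (Bv_rb b hcont hanti hv1) (by nlinarith)
          have hadd : (∫ w in (0:ℝ)..v, b w) + ∫ w in v..1, b w = 0 := by
            rw [intervalIntegral.integral_add_adjacent_intervals
              (auxInt b hcont (Set.left_mem_Icc.2 zero_le_one) hv1)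
              (auxInt b hcont hv1 (Set.right_mem_Icc.2 zero_le_one)), hB1]
          have hlb : (1 - v) * (-b u₁) ≤ ∫ w in (0:ℝ)..v, b w := by nlinarith
          have hvb : (0:ℝ) < (1 - v) * (-b u₁) := mul_pos (by linarith) (by linarith)
          have hBvpos : 0 < ∫ w in (0:ℝ)..v, b w := lt_of_lt_of_le hvb hlb
          rw [Real.norm_eq_abs, abs_of_nonneg (div_nonneg (by nlinarith [sq_nonneg σ])
            (by linarith))]
          calc (1 - v) * σ^2 / (2 * ∫ w in (0:ℝ)..v, b w)
              ≤ (1 - v) * σ^2 / (2 * ((1 - v) * (-b u₁))) :=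
                div_le_div_of_nonneg_left (by nlinarith [sq_nonneg σ]) (by linarith) (by linarith)
            _ = σ^2 / (2 * (-b u₁)) := by
                rw [div_eq_div_iff (by linarith) (by linarith)]
                ring
    refine (hmid u u₁ hu ⟨lt_of_lt_of_le hu.1 hu₁mem.1, hu₁mem.2⟩
      (fun v => (1 - v) * σ^2) (by continuity)).trans h2
end

section
/- As u ↓ 0, Φ(u) ~ (σ²/(2 b(0))) · log u, and as u ↑ 1, Φ(u) ~ (σ²/(2 b(1))) · log(1-u); i.e. the corresponding ratios tend to 1. -/
open Filter Set MeasureTheory intervalIntegral Topology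


lemma helper1 {f : ℝ → ℝ} {a b c : ℝ} (hab : a < b)
    (hf : ContinuousOn f (Set.Ioc a b)) (hlim : Tendsto f (𝓝[>] a) (𝓝 c)) :
    IntervalIntegrable f volume a b := by
  set F : ℝ → ℝ := fun x => if x ≤ a then c else f x with hFdef
  have hFeq : ∀ y ∈ Set.Ioc a b, F y = f y := by
    intro y hy; simp [hFdef, not_le.2 hy.1]
  have hF : ContinuousOn F (Set.Icc a b) := by
    intro x hx
    rcases eq_or_lt_of_le hx.1 with rfl | h
    · have hFx : F a = c := by simp [hFdef]
      rw [ContinuousWithinAt, hFx]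
      have hIcc : Set.Icc a b = insert a (Set.Ioc a b) := (Set.Ioc_insert_left hx.2).symm
      rw [hIcc, nhdsWithin_insert]
      refine Tendsto.sup ?_ ?_
      · simpa [hFx] using tendsto_pure_nhds F a
      · refine Tendsto.congr' ?_ (hlim.mono_left (nhdsWithin_mono _ Set.Ioc_subset_Ioi_self))
        filter_upwards [self_mem_nhdsWithin] with y hy using (hFeq y hy).symm
    · have hmem : Set.Ioc a b ∈ 𝓝[Set.Icc a b] x :=
        mem_nhdsWithin.2 ⟨Set.Ioi a, isOpen_Ioi, h, fun y hy => ⟨hy.1, hy.2.2⟩⟩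
      refine ContinuousWithinAt.congr_of_eventuallyEq
        ((hf x ⟨h, hx.2⟩).mono_of_mem_nhdsWithin hmem) ?_ (hFeq x ⟨h, hx.2⟩)
      filter_upwards [hmem] with y hy using hFeq y hy
  have hFi : IntervalIntegrable F volume a b := by
    apply ContinuousOn.intervalIntegrable; rwa [Set.uIcc_of_le hab.le]
  rw [intervalIntegrable_iff_integrableOn_Ioc_of_le hab.le] at hFi ⊢
  exact hFi.congr_fun hFeq measurableSet_Ioc

lemma helper2 {f : ℝ → ℝ} {a b c : ℝ} (hab : a < b)
    (hf : ContinuousOn f (Set.Ico a b)) (hlim : Tendsto f (𝓝[<] b) (𝓝 c)) :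
    IntervalIntegrable f volume a b := by
  have h1 : IntervalIntegrable (fun x => f (a + b - x)) volume a b := by
    refine helper1 (c := c) hab ?_ ?_
    · refine hf.comp (by fun_prop) ?_
      intro x hx
      simp only [Set.mem_Ioc] at hx
      exact ⟨by linarith [hx.2], by linarith [hx.1]⟩
    · refine hlim.comp ?_
      rw [tendsto_nhdsWithin_iff]
      constructor
      · have : Tendsto (fun x : ℝ => a + b - x) (𝓝 a) (𝓝 (a + b - a)) := (continuous_const.sub continuous_id).tendsto a
        simpa using this.mono_left nhdsWithin_le_nhds
      · filter_upwards [self_mem_nhdsWithin] with x hx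
        simp only [Set.mem_Iio]
        have : a < x := hx
        linarith
  have h2 := h1.comp_sub_left (a + b)
  simp only [add_sub_cancel_left, add_sub_cancel_right, sub_sub_cancel] at h2
  exact h2.symm


lemma log_aux (δ e K : ℝ) (hδ : 0 < δ) :
    Tendsto (fun u => (e * Real.log (δ / u) + K) / Real.log u) (𝓝[>] (0:ℝ)) (𝓝 (-e)) := by
  have hlog : Tendsto Real.log (𝓝[>] (0:ℝ)) atBot := Real.tendsto_log_nhdsGT_zero
  have hneg : Tendsto (fun u => -Real.log u) (𝓝[>] (0:ℝ)) atTop :=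
    tendsto_neg_atBot_atTop.comp hlog
  have hinv' : Tendsto (fun u => (-Real.log u)⁻¹) (𝓝[>] (0:ℝ)) (𝓝 0) :=
    hneg.inv_tendsto_atTop
  have hinv : Tendsto (fun u => (Real.log u)⁻¹) (𝓝[>] (0:ℝ)) (𝓝 0) := by
    have := hinv'.neg
    simp only [neg_zero] at this
    refine this.congr fun u => by rw [← inv_neg, neg_neg]
  have hmain : Tendsto (fun u => (e * Real.log δ + K) * (Real.log u)⁻¹ - e)
      (𝓝[>] (0:ℝ)) (𝓝 (-e)) := by
    have := (hinv.const_mul (e * Real.log δ + K)).sub_const e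
    simpa using this
  refine hmain.congr' ?_
  filter_upwards [Ioo_mem_nhdsGT (show (0:ℝ) < min δ 1 by positivity)] with u hu
  have hu0 : 0 < u := hu.1
  have hu1 : u < 1 := lt_of_lt_of_le hu.2 (min_le_right _ _)
  have hlogne : Real.log u ≠ 0 := ne_of_lt (Real.log_neg hu0 hu1)
  rw [Real.log_div (ne_of_gt hδ) (ne_of_gt hu0)]
  field_simp
  ring

lemma key {ψ : ℝ → ℝ} {c : ℝ}
    (hψ : ContinuousOn ψ (Set.Ioc 0 (1/2)))
    (hlim : Tendsto (fun v => v * ψ v) (𝓝[>] (0:ℝ)) (𝓝 c)) :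
    Tendsto (fun u => (∫ v in u..(1/2 : ℝ), ψ v) / Real.log u) (𝓝[>] (0:ℝ)) (𝓝 (-c)) := by
  rw [Metric.tendsto_nhds]
  intro ε hε
  have hev : {v : ℝ | |v * ψ v - c| < ε / 3} ∈ 𝓝[>] (0:ℝ) := by
    have := Metric.tendsto_nhds.1 hlim (ε / 3) (by positivity)
    have h' : ∀ᶠ x in 𝓝[>] (0:ℝ), |x * ψ x - c| < ε / 3 := by simpa [Real.dist_eq] using this
    exact h'
  obtain ⟨δ₀, hδ₀, hsub₀⟩ := mem_nhdsGT_iff_exists_Ioc_subset.1 hev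
  set δ : ℝ := min δ₀ (1/2) with hδdef
  have hδpos : 0 < δ := lt_min hδ₀ (by norm_num)
  have hδle : δ ≤ 1/2 := min_le_right _ _
  have hsub : ∀ v ∈ Set.Ioc (0:ℝ) δ, |v * ψ v - c| < ε / 3 := fun v hv =>
    hsub₀ ⟨hv.1, le_trans hv.2 (min_le_left _ _)⟩
  set K : ℝ := ∫ v in δ..(1/2:ℝ), ψ v with hKdef
  have h₁ := (log_aux δ (c + ε/3) K hδpos).eventually
    (eventually_gt_nhds (show -c - ε < -(c + ε/3) by linarith))
  have h₂ := (log_aux δ (c - ε/3) K hδpos).eventually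
    (eventually_lt_nhds (show -(c - ε/3) < -c + ε by linarith))
  filter_upwards [h₁, h₂, Ioo_mem_nhdsGT hδpos] with u hg1 hg2 hu
  have hu0 : 0 < u := hu.1
  have huδ : u < δ := hu.2
  have hu1 : u < 1 := lt_of_lt_of_le (lt_of_lt_of_le huδ hδle) (by norm_num)
  have hlogneg : Real.log u < 0 := Real.log_neg hu0 hu1
  have hIccsub : Set.Icc u δ ⊆ Set.Ioc (0:ℝ) (1/2) := fun x hx =>
    ⟨lt_of_lt_of_le hu0 hx.1, le_trans hx.2 hδle⟩
  have hint1 : IntervalIntegrable ψ volume u δ := by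
    apply ContinuousOn.intervalIntegrable
    rw [Set.uIcc_of_le huδ.le]
    exact hψ.mono hIccsub
  have hint2 : IntervalIntegrable ψ volume δ (1/2) := by
    apply ContinuousOn.intervalIntegrable
    rw [Set.uIcc_of_le hδle]
    exact hψ.mono fun x hx => ⟨lt_of_lt_of_le hδpos hx.1, hx.2⟩
  have hintu : ∀ e : ℝ, IntervalIntegrable (fun v => e / v) volume u δ := by
    intro e
    apply ContinuousOn.intervalIntegrable
    rw [Set.uIcc_of_le huδ.le]
    exact continuousOn_const.div continuousOn_id
      (fun x hx => ne_of_gt (lt_of_lt_of_le hu0 hx.1))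
  have hzero : (0:ℝ) ∉ Set.uIcc u δ := by
    rw [Set.uIcc_of_le huδ.le]
    exact fun h => absurd h.1 (not_le.2 hu0)
  have hcalc : ∀ e : ℝ, (∫ v in u..δ, e / v) = e * Real.log (δ / u) := by
    intro e
    simp only [div_eq_mul_inv]
    rw [intervalIntegral.integral_const_mul, integral_inv hzero, div_eq_mul_inv]
  have hbound : ∀ v ∈ Set.Icc u δ, (c - ε/3) / v ≤ ψ v ∧ ψ v ≤ (c + ε/3) / v := by
    intro v hv
    have hv0 : 0 < v := lt_of_lt_of_le hu0 hv.1
    have habs := hsub v ⟨hv0, hv.2⟩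
    rw [abs_lt] at habs
    constructor
    · rw [div_le_iff₀ hv0]
      nlinarith [habs.1]
    · rw [le_div_iff₀ hv0]
      nlinarith [habs.2]
  have hup : (∫ v in u..δ, ψ v) ≤ (c + ε/3) * Real.log (δ / u) := by
    rw [← hcalc (c + ε/3)]
    exact intervalIntegral.integral_mono_on huδ.le hint1 (hintu _) fun v hv => (hbound v hv).2
  have hlo : (c - ε/3) * Real.log (δ / u) ≤ ∫ v in u..δ, ψ v := by
    rw [← hcalc (c - ε/3)]
    exact intervalIntegral.integral_mono_on huδ.le (hintu _) hint1 fun v hv => (hbound v hv).1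
  have hsplit : (∫ v in u..(1/2:ℝ), ψ v) = (∫ v in u..δ, ψ v) + K :=
    (intervalIntegral.integral_add_adjacent_intervals hint1 hint2).symm
  rw [Real.dist_eq, abs_lt]
  have hFup : (∫ v in u..(1/2:ℝ), ψ v) ≤ (c + ε/3) * Real.log (δ / u) + K := by
    rw [hsplit]; linarith
  have hFlo : (c - ε/3) * Real.log (δ / u) + K ≤ ∫ v in u..(1/2:ℝ), ψ v := by
    rw [hsplit]; linarith
  have hd1 : ((c + ε/3) * Real.log (δ / u) + K) / Real.log u
      ≤ (∫ v in u..(1/2:ℝ), ψ v) / Real.log u :=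
    (div_le_div_right_of_neg hlogneg).2 hFup
  have hd2 : (∫ v in u..(1/2:ℝ), ψ v) / Real.log u
      ≤ ((c - ε/3) * Real.log (δ / u) + K) / Real.log u :=
    (div_le_div_right_of_neg hlogneg).2 hFlo
  constructor
  · linarith
  · linarith


variable {b : ℝ → ℝ}

lemma bint (hcont : ContinuousOn b (Set.Icc 0 1)) {s t : ℝ} (hs : s ∈ Set.Icc (0:ℝ) 1)
    (ht : t ∈ Set.Icc (0:ℝ) 1) : IntervalIntegrable b volume s t := by
  exact ContinuousOn.intervalIntegrable (hcont.mono (Set.uIcc_subset_Icc hs ht))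

lemma b0_pos (hcont : ContinuousOn b (Set.Icc 0 1)) (hanti : StrictAntiOn b (Set.Icc 0 1))
    (hB1 : ∫ v in (0:ℝ)..1, b v = 0) : 0 < b 0 := by
  by_contra h
  push_neg at h
  have hneg : 0 < ∫ v in (0:ℝ)..1, -b v := by
    refine intervalIntegral_pos_of_pos_on ((bint hcont ?_ ?_).neg) ?_ one_pos
    · exact ⟨le_refl _, zero_le_one⟩
    · exact ⟨zero_le_one, le_refl _⟩
    · intro x hx
      have := hanti (Set.mem_Icc.2 ⟨le_refl _, zero_le_one⟩)
        (Set.mem_Icc.2 ⟨hx.1.le, hx.2.le⟩) hx.1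
      simp only [neg_pos]
      linarith
  rw [intervalIntegral.integral_neg, hB1] at hneg
  simp at hneg

lemma b1_neg (hcont : ContinuousOn b (Set.Icc 0 1)) (hanti : StrictAntiOn b (Set.Icc 0 1))
    (hB1 : ∫ v in (0:ℝ)..1, b v = 0) : b 1 < 0 := by
  by_contra h
  push_neg at h
  have hpos : 0 < ∫ v in (0:ℝ)..1, b v := by
    refine intervalIntegral_pos_of_pos_on (bint hcont ?_ ?_) ?_ one_pos
    · exact ⟨le_refl _, zero_le_one⟩
    · exact ⟨zero_le_one, le_refl _⟩
    · intro x hx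
      have := hanti (Set.mem_Icc.2 ⟨hx.1.le, hx.2.le⟩)
        (Set.mem_Icc.2 ⟨zero_le_one, le_refl _⟩) hx.2
      linarith
  rw [hB1] at hpos
  simp at hpos

lemma B_pos (hcont : ContinuousOn b (Set.Icc 0 1)) (hanti : StrictAntiOn b (Set.Icc 0 1))
    (hB1 : ∫ v in (0:ℝ)..1, b v = 0) :
    ∀ v ∈ Set.Ioo (0:ℝ) 1, 0 < ∫ w in (0:ℝ)..v, b w := by
  intro v hv
  have hv01 : v ∈ Set.Icc (0:ℝ) 1 := ⟨hv.1.le, hv.2.le⟩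
  have h0 : (0:ℝ) ∈ Set.Icc (0:ℝ) 1 := ⟨le_refl _, zero_le_one⟩
  have h1 : (1:ℝ) ∈ Set.Icc (0:ℝ) 1 := ⟨zero_le_one, le_refl _⟩
  rcases le_or_gt 0 (b v) with h | h
  · refine intervalIntegral_pos_of_pos_on (bint hcont h0 hv01) ?_ hv.1
    intro x hx
    have := hanti (Set.mem_Icc.2 ⟨hx.1.le, le_trans hx.2.le hv.2.le⟩) hv01 hx.2
    linarith
  · have hneg : 0 < ∫ w in v..(1:ℝ), -b w := by
      refine intervalIntegral_pos_of_pos_on ((bint hcont hv01 h1).neg) ?_ hv.2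
      intro x hx
      have := hanti hv01 (Set.mem_Icc.2 ⟨le_trans hv.1.le hx.1.le, hx.2.le⟩) hx.1
      simp only [neg_pos]
      linarith
    rw [intervalIntegral.integral_neg] at hneg
    have hadd : (∫ w in (0:ℝ)..v, b w) + ∫ w in v..(1:ℝ), b w = ∫ w in (0:ℝ)..1, b w :=
      intervalIntegral.integral_add_adjacent_intervals (bint hcont h0 hv01) (bint hcont hv01 h1)
    rw [hB1] at hadd
    linarith

lemma B_slope0 (hcont : ContinuousOn b (Set.Icc 0 1)) :
    Tendsto (fun v => (∫ w in (0:ℝ)..v, b w) / v) (𝓝[>] (0:ℝ)) (𝓝 (b 0)) := by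
  have h0 : (0:ℝ) ∈ Set.Icc (0:ℝ) 1 := ⟨le_refl _, zero_le_one⟩
  have hIcc : Set.Icc (0:ℝ) 1 ∈ 𝓝[Set.Ici 0] (0:ℝ) :=
    mem_nhdsWithin.2 ⟨Set.Iio 1, isOpen_Iio, by norm_num, fun y hy => ⟨hy.2, hy.1.le⟩⟩
  have hIcc' : Set.Icc (0:ℝ) 1 ∈ 𝓝[Set.Ioi 0] (0:ℝ) :=
    nhdsWithin_mono _ Set.Ioi_subset_Ici_self hIcc
  have hmeas : StronglyMeasurableAtFilter b (𝓝[Set.Ioi 0] (0:ℝ)) :=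
    ⟨Set.Icc 0 1, hIcc', (hcont.aestronglyMeasurable measurableSet_Icc)⟩
  have hcw : ContinuousWithinAt b (Set.Ioi 0) 0 :=
    (hcont 0 h0).mono_of_mem_nhdsWithin hIcc'
  have hd : HasDerivWithinAt (fun u => ∫ w in (0:ℝ)..u, b w) (b 0) (Set.Ici 0) 0 :=
    intervalIntegral.integral_hasDerivWithinAt_right (IntervalIntegrable.refl) hmeas hcw
  rw [hasDerivWithinAt_iff_tendsto_slope] at hd
  have hset : Set.Ici (0:ℝ) \ {0} = Set.Ioi 0 := Set.Ici_sdiff_left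
  rw [hset] at hd
  refine hd.congr' ?_
  filter_upwards [self_mem_nhdsWithin] with v hv
  rw [slope_def_field]
  simp [intervalIntegral.integral_same]

lemma B_slope1 (hcont : ContinuousOn b (Set.Icc 0 1))
    (hB1 : ∫ v in (0:ℝ)..1, b v = 0) :
    Tendsto (fun v => (∫ w in (0:ℝ)..v, b w) / (1 - v)) (𝓝[<] (1:ℝ)) (𝓝 (-b 1)) := by
  have h1 : (1:ℝ) ∈ Set.Icc (0:ℝ) 1 := ⟨zero_le_one, le_refl _⟩
  have hIcc : Set.Icc (0:ℝ) 1 ∈ 𝓝[Set.Iic 1] (1:ℝ) :=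
    mem_nhdsWithin.2 ⟨Set.Ioi 0, isOpen_Ioi, by norm_num, fun y hy => ⟨hy.1.le, hy.2⟩⟩
  have hmeas : StronglyMeasurableAtFilter b (𝓝[Set.Iic 1] (1:ℝ)) :=
    ⟨Set.Icc 0 1, hIcc, (hcont.aestronglyMeasurable measurableSet_Icc)⟩
  have hcw : ContinuousWithinAt b (Set.Iic 1) 1 :=
    (hcont 1 h1).mono_of_mem_nhdsWithin hIcc
  have hd : HasDerivWithinAt (fun u => ∫ w in (0:ℝ)..u, b w) (b 1) (Set.Iic 1) 1 :=
    intervalIntegral.integral_hasDerivWithinAt_right (bint hcont ⟨le_refl _, zero_le_one⟩ h1)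
      hmeas hcw
  rw [hasDerivWithinAt_iff_tendsto_slope] at hd
  have hset : Set.Iic (1:ℝ) \ {1} = Set.Iio 1 := Set.Iic_diff_right
  rw [hset] at hd
  have := hd.neg
  refine this.congr' ?_
  filter_upwards [self_mem_nhdsWithin] with v hv
  have hv1 : v ≠ 1 := ne_of_lt hv
  rw [slope_def_field, hB1]
  rw [show ∀ x : ℝ, (x - 1) = -(1 - x) from fun x => by ring]
  rw [div_neg]
  ring

section aux

lemma loginv0 : Tendsto (fun u : ℝ => (Real.log u)⁻¹) (𝓝[>] (0:ℝ)) (𝓝 0) := by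
  have hlog : Tendsto Real.log (𝓝[>] (0:ℝ)) atBot := Real.tendsto_log_nhdsGT_zero
  have hneg : Tendsto (fun u => -Real.log u) (𝓝[>] (0:ℝ)) atTop :=
    tendsto_neg_atBot_atTop.comp hlog
  have hinv' : Tendsto (fun u => (-Real.log u)⁻¹) (𝓝[>] (0:ℝ)) (𝓝 0) :=
    hneg.inv_tendsto_atTop
  have := hinv'.neg
  simp only [neg_zero] at this
  refine this.congr fun u => by rw [← inv_neg, neg_neg]

end aux

theorem stmt_6 (b : ℝ → ℝ) (σ : ℝ) (hσ : σ ≠ 0)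
    (hcont : ContinuousOn b (Set.Icc 0 1))
    (hanti : StrictAntiOn b (Set.Icc 0 1))
    (hB1 : ∫ v in (0:ℝ)..1, b v = 0)
    (Φ : ℝ → ℝ)
    (hΦ : ∀ u, Φ u = (∫ v in (0:ℝ)..u, v * σ^2 / (2 * ∫ w in (0:ℝ)..v, b w))
        - ∫ v in u..(1:ℝ), (1 - v) * σ^2 / (2 * ∫ w in (0:ℝ)..v, b w)) :
    Tendsto (fun u : ℝ => Φ u / (σ^2 / (2 * b 0) * Real.log u))
      (nhdsWithin 0 (Set.Ioi 0)) (nhds 1) ∧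
    Tendsto (fun u : ℝ => Φ u / (σ^2 / (2 * b 1) * Real.log (1 - u)))
      (nhdsWithin 1 (Set.Iio 1)) (nhds 1) := by
  have hb0 : 0 < b 0 := b0_pos hcont hanti hB1
  have hb1 : b 1 < 0 := b1_neg hcont hanti hB1
  obtain ⟨B, hBdef⟩ : ∃ B : ℝ → ℝ, ∀ u, B u = ∫ w in (0:ℝ)..u, b w := ⟨_, fun _ => rfl⟩
  have hBpos : ∀ v ∈ Set.Ioo (0:ℝ) 1, 0 < B v := by
    intro v hv; rw [hBdef]; exact B_pos hcont hanti hB1 v hv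
  have hs0 : Tendsto (fun v => B v / v) (𝓝[>] (0:ℝ)) (𝓝 (b 0)) := by
    simp_rw [hBdef]; exact B_slope0 hcont
  have hs1 : Tendsto (fun v => B v / (1 - v)) (𝓝[<] (1:ℝ)) (𝓝 (-b 1)) := by
    simp_rw [hBdef]; exact B_slope1 hcont hB1
  have hBcont : ContinuousOn B (Set.Icc 0 1) := by
    have hi : IntegrableOn b (Set.uIcc 0 1) volume := by
      rw [Set.uIcc_of_le zero_le_one]; exact hcont.integrableOn_Icc
    have h2 := continuousOn_primitive_interval hi
    rw [Set.uIcc_of_le zero_le_one] at h2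
    exact h2.congr fun u _ => hBdef u
  obtain ⟨ψ, hψdef⟩ : ∃ ψ : ℝ → ℝ, ∀ v, ψ v = σ^2 / (2 * B v) := ⟨_, fun _ => rfl⟩
  obtain ⟨f, hfdef⟩ : ∃ f : ℝ → ℝ, ∀ v, f v = v * σ^2 / (2 * B v) := ⟨_, fun _ => rfl⟩
  obtain ⟨g, hgdef⟩ : ∃ g : ℝ → ℝ, ∀ v, g v = (1 - v) * σ^2 / (2 * B v) := ⟨_, fun _ => rfl⟩
  have hΦ' : ∀ u, Φ u = (∫ v in (0:ℝ)..u, f v) - ∫ v in u..(1:ℝ), g v := by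
    intro u
    simp_rw [hfdef, hgdef, hBdef]
    exact hΦ u
  clear hΦ
  have hBne : ∀ v ∈ Set.Ioo (0:ℝ) 1, 2 * B v ≠ 0 := fun v hv => by
    have := hBpos v hv; positivity
  have hBIoo : ContinuousOn B (Set.Ioo 0 1) := hBcont.mono Set.Ioo_subset_Icc_self
  have hψcont : ContinuousOn ψ (Set.Ioo 0 1) :=
    (continuousOn_const.div (continuousOn_const.mul hBIoo) hBne).congr fun v _ => hψdef v
  have hfc : ContinuousOn f (Set.Ioo 0 1) :=
    ((continuous_id.continuousOn.mul continuousOn_const).div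
      (continuousOn_const.mul hBIoo) hBne).congr fun v _ => hfdef v
  have hgc : ContinuousOn g (Set.Ioo 0 1) :=
    (((continuousOn_const.sub continuous_id.continuousOn).mul continuousOn_const).div
      (continuousOn_const.mul hBIoo) hBne).congr fun v _ => hgdef v
  have half_mem : Set.Ioc (0:ℝ) (1/2) ⊆ Set.Ioo 0 1 := fun x hx =>
    ⟨hx.1, lt_of_le_of_lt hx.2 (by norm_num)⟩
  have half_mem' : Set.Ico (1/2:ℝ) 1 ⊆ Set.Ioo 0 1 := fun x hx =>
    ⟨lt_of_lt_of_le (by norm_num) hx.1, hx.2⟩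
  -- limit of v * ψ v at 0⁺
  have hlim0 : Tendsto (fun v => v * ψ v) (𝓝[>] (0:ℝ)) (𝓝 (σ^2/2 * (b 0)⁻¹)) := by
    have h1 : Tendsto (fun v => σ^2/2 * (B v / v)⁻¹) (𝓝[>] (0:ℝ)) (𝓝 (σ^2/2 * (b 0)⁻¹)) :=
      (hs0.inv₀ (ne_of_gt hb0)).const_mul _
    refine h1.congr' ?_
    filter_upwards [Ioo_mem_nhdsGT one_pos] with v hv
    have hB := hBpos v hv
    have hv0 : v ≠ 0 := ne_of_gt hv.1
    have hBv : B v ≠ 0 := ne_of_gt hB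
    rw [hψdef v, inv_div]
    field_simp
  -- limit of g at 1⁻
  have hmap10 : Tendsto (fun u : ℝ => 1 - u) (𝓝[<] (1:ℝ)) (𝓝[>] (0:ℝ)) := by
    rw [tendsto_nhdsWithin_iff]
    constructor
    · have : Tendsto (fun u : ℝ => 1 - u) (𝓝 1) (𝓝 (1 - 1)) :=
        (continuous_const.sub continuous_id).tendsto 1
      simpa using this.mono_left nhdsWithin_le_nhds
    · filter_upwards [self_mem_nhdsWithin] with x (hx : x < 1)
      simp only [Set.mem_Ioi]; linarith
  have hmap01 : Tendsto (fun w : ℝ => 1 - w) (𝓝[>] (0:ℝ)) (𝓝[<] (1:ℝ)) := by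
    rw [tendsto_nhdsWithin_iff]
    constructor
    · have : Tendsto (fun u : ℝ => 1 - u) (𝓝 0) (𝓝 (1 - 0)) :=
        (continuous_const.sub continuous_id).tendsto 0
      simpa using this.mono_left nhdsWithin_le_nhds
    · filter_upwards [self_mem_nhdsWithin] with x (hx : 0 < x)
      simp only [Set.mem_Iio]; linarith
  have hglim1 : Tendsto g (𝓝[<] (1:ℝ)) (𝓝 (σ^2/2 * (-b 1)⁻¹)) := by
    have h1 : Tendsto (fun v => σ^2/2 * (B v / (1 - v))⁻¹) (𝓝[<] (1:ℝ))
        (𝓝 (σ^2/2 * (-b 1)⁻¹)) :=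
      (hs1.inv₀ (by linarith)).const_mul _
    refine h1.congr' ?_
    filter_upwards [Ioo_mem_nhdsLT one_pos] with v hv
    have hB := hBpos v hv
    have hBv : B v ≠ 0 := ne_of_gt hB
    rw [hgdef v, inv_div]
    field_simp
  -- representation of Φ
  have hΦrep : ∀ u ∈ Set.Ioo (0:ℝ) 1, Φ u = Φ (1/2) + ∫ v in (1/2:ℝ)..u, ψ v := by
    intro u hu
    have hlimf0 : Tendsto f (𝓝[>] (0:ℝ)) (𝓝 (σ^2/2 * (b 0)⁻¹)) := by
      refine hlim0.congr fun v => ?_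
      rw [hψdef v, hfdef v, mul_div_assoc]
    have hhalf : (1/2:ℝ) ∈ Set.Ioo (0:ℝ) 1 := by norm_num
    have hint_f1 : IntervalIntegrable f volume 0 (1/2) :=
      helper1 (by norm_num) (hfc.mono half_mem) hlimf0
    have hint_f2 : IntervalIntegrable f volume (1/2) u := by
      apply ContinuousOn.intervalIntegrable
      exact hfc.mono (Set.ordConnected_Ioo.uIcc_subset hhalf hu)
    have hint_g2 : IntervalIntegrable g volume (1/2) 1 :=
      helper2 (by norm_num) (hgc.mono half_mem') hglim1
    have hint_g1 : IntervalIntegrable g volume (1/2) u := by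
      apply ContinuousOn.intervalIntegrable
      exact hgc.mono (Set.ordConnected_Ioo.uIcc_subset hhalf hu)
    have e1 : (∫ v in (0:ℝ)..(1/2:ℝ), f v) + ∫ v in (1/2:ℝ)..u, f v = ∫ v in (0:ℝ)..u, f v :=
      intervalIntegral.integral_add_adjacent_intervals hint_f1 hint_f2
    have e2 : (∫ v in u..(1/2:ℝ), g v) + ∫ v in (1/2:ℝ)..(1:ℝ), g v = ∫ v in u..(1:ℝ), g v :=
      intervalIntegral.integral_add_adjacent_intervals hint_g1.symm hint_g2
    have e3 : (∫ v in u..(1/2:ℝ), g v) = -∫ v in (1/2:ℝ)..u, g v :=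
      intervalIntegral.integral_symm (1/2) u
    have e4 : (∫ v in (1/2:ℝ)..u, ψ v)
        = (∫ v in (1/2:ℝ)..u, f v) + ∫ v in (1/2:ℝ)..u, g v := by
      rw [← intervalIntegral.integral_add hint_f2 hint_g1]
      refine intervalIntegral.integral_congr fun v _ => ?_
      rw [hψdef v, hfdef v, hgdef v, ← add_div]
      congr 1
      ring
    rw [hΦ' u, hΦ' (1/2)]
    linarith
  -- Part 1
  set c₀ : ℝ := σ^2 / (2 * b 0) with hc₀def
  have hc₀eq : c₀ = σ^2/2 * (b 0)⁻¹ := by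
    rw [hc₀def]
    field_simp
  have hc₀ : c₀ ≠ 0 := by
    rw [hc₀def]
    exact div_ne_zero (pow_ne_zero 2 hσ) (by positivity)
  have hkey0 : Tendsto (fun u => (∫ v in u..(1/2:ℝ), ψ v) / Real.log u) (𝓝[>] (0:ℝ))
      (𝓝 (-c₀)) := by
    rw [hc₀eq]
    exact key (hψcont.mono half_mem) hlim0
  have part1 : Tendsto (fun u : ℝ => Φ u / (c₀ * Real.log u)) (𝓝[>] (0:ℝ)) (𝓝 1) := by
    have T := (loginv0.const_mul (Φ (1/2) * c₀⁻¹)).sub (hkey0.mul_const c₀⁻¹)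
    have hval : Φ (1/2) * c₀⁻¹ * 0 - (-c₀) * c₀⁻¹ = 1 := by
      field_simp
      simp
    rw [hval] at T
    refine T.congr' ?_
    filter_upwards [Ioo_mem_nhdsGT one_pos] with u hu
    have hlogne : Real.log u ≠ 0 := ne_of_lt (Real.log_neg hu.1 hu.2)
    rw [hΦrep u hu, intervalIntegral.integral_symm u (1/2)]
    field_simp
    ring
  -- Part 2
  set c₁ : ℝ := σ^2 / (2 * b 1) with hc₁def
  have hb1ne : b 1 ≠ 0 := ne_of_lt hb1
  have hc₁ : c₁ ≠ 0 := by
    rw [hc₁def]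
    exact div_ne_zero (pow_ne_zero 2 hσ) (by simp [hb1ne])
  have hψt : ContinuousOn (fun w => ψ (1 - w)) (Set.Ioc 0 (1/2)) := by
    refine hψcont.comp ((continuous_const.sub continuous_id).continuousOn) ?_
    intro w hw
    simp only [Set.mem_Ioc] at hw
    exact ⟨by linarith [hw.2], by linarith [hw.1]⟩
  have hlim1' : Tendsto (fun w => w * ψ (1 - w)) (𝓝[>] (0:ℝ)) (𝓝 (σ^2/2 * (-b 1)⁻¹)) := by
    have hcomp : Tendsto (fun w => B (1 - w) / (1 - (1 - w))) (𝓝[>] (0:ℝ)) (𝓝 (-b 1)) :=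
      hs1.comp hmap01
    have h1 : Tendsto (fun w => σ^2/2 * (B (1 - w) / (1 - (1 - w)))⁻¹) (𝓝[>] (0:ℝ))
        (𝓝 (σ^2/2 * (-b 1)⁻¹)) :=
      (hcomp.inv₀ (by linarith)).const_mul _
    refine h1.congr' ?_
    filter_upwards [Ioo_mem_nhdsGT (show (0:ℝ) < 1/2 by norm_num)] with w hw
    have h1w : (1 - w) ∈ Set.Ioo (0:ℝ) 1 := ⟨by linarith [hw.2], by linarith [hw.1]⟩
    have hB := hBpos _ h1w
    have hBv : B (1 - w) ≠ 0 := ne_of_gt hB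
    have hww : (1 : ℝ) - (1 - w) = w := by ring
    rw [hψdef (1 - w), hww, inv_div]
    field_simp
  have hkey1 : Tendsto (fun u => (∫ v in (1/2:ℝ)..u, ψ v) / Real.log (1 - u))
      (𝓝[<] (1:ℝ)) (𝓝 c₁) := by
    have h2 := (key hψt hlim1').comp hmap10
    have hval : -(σ^2/2 * (-b 1)⁻¹) = c₁ := by
      rw [hc₁def]
      field_simp
    rw [hval] at h2
    refine h2.congr fun u => ?_
    simp only [Function.comp]
    congr 1
    rw [intervalIntegral.integral_comp_sub_left ψ 1]
    norm_num
  have part2 : Tendsto (fun u : ℝ => Φ u / (c₁ * Real.log (1 - u))) (𝓝[<] (1:ℝ)) (𝓝 1) := by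
    have hloginv1 : Tendsto (fun u => (Real.log (1 - u))⁻¹) (𝓝[<] (1:ℝ)) (𝓝 0) :=
      loginv0.comp hmap10
    have T := (hloginv1.const_mul (Φ (1/2) * c₁⁻¹)).add (hkey1.mul_const c₁⁻¹)
    have hval : Φ (1/2) * c₁⁻¹ * 0 + c₁ * c₁⁻¹ = 1 := by
      field_simp
      simp
    rw [hval] at T
    refine T.congr' ?_
    filter_upwards [Ioo_mem_nhdsLT one_pos] with u hu
    have h1u : (1 - u) ∈ Set.Ioo (0:ℝ) 1 := ⟨by linarith [hu.2], by linarith [hu.1]⟩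
    have hlogne : Real.log (1 - u) ≠ 0 := ne_of_lt (Real.log_neg h1u.1 h1u.2)
    rw [hΦrep u hu]
    field_simp
  exact ⟨part1, part2⟩
end

section
/- The function Φ is integrable on (0,1) and ∫₀¹ Φ(u) du = 0. -/
open MeasureTheory Set intervalIntegral

theorem stmt_7 (b : ℝ → ℝ) (σ : ℝ) (hσ : σ ≠ 0)
    (hcont : ContinuousOn b (Set.Icc 0 1))
    (hanti : StrictAntiOn b (Set.Icc 0 1))
    (hB1 : ∫ v in (0:ℝ)..1, b v = 0)
    (Φ : ℝ → ℝ)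
    (hΦ : ∀ u, Φ u = (∫ v in (0:ℝ)..u, v * σ^2 / (2 * ∫ w in (0:ℝ)..v, b w))
        - ∫ v in u..(1:ℝ), (1 - v) * σ^2 / (2 * ∫ w in (0:ℝ)..v, b w)) :
    MeasureTheory.IntegrableOn Φ (Set.Ioo 0 1) ∧ ∫ u in Set.Ioo (0:ℝ) 1, Φ u = 0 := by
  classical
  have hσ2 : (0:ℝ) < σ^2 := by positivity
  -- PART 1 : bounds on B (placeholders for now, proved in t1)
  have hbint : ∀ x y : ℝ, 0 ≤ x → x ≤ y → y ≤ 1 → IntervalIntegrable b volume x y := by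
    intro x y hx hxy hy
    exact (hcont.mono (by rw [uIcc_of_le hxy]; exact Icc_subset_Icc hx hy)).intervalIntegrable
  have hban : AntitoneOn b (Set.Icc 0 1) := hanti.antitoneOn
  -- upper and lower bounds for integrals of b by constants
  have hub : ∀ x y : ℝ, 0 ≤ x → x ≤ y → y ≤ 1 → (∫ t in x..y, b t) ≤ (y - x) * b x := by
    intro x y hx hxy hy
    have := intervalIntegral.integral_mono_on (μ := volume) (f := b) (g := fun _ => b x)
      hxy (hbint x y hx hxy hy) intervalIntegrable_const
      (fun t ht => hban ⟨hx, hxy.trans hy⟩ ⟨hx.trans ht.1, ht.2.trans hy⟩ ht.1)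
    simpa [smul_eq_mul] using this
  have hlow : ∀ x y : ℝ, 0 ≤ x → x ≤ y → y ≤ 1 → (y - x) * b y ≤ ∫ t in x..y, b t := by
    intro x y hx hxy hy
    have := intervalIntegral.integral_mono_on (μ := volume) (f := fun _ => b y) (g := b)
      hxy intervalIntegrable_const (hbint x y hx hxy hy)
      (fun t ht => hban ⟨hx.trans ht.1, ht.2.trans hy⟩ ⟨hx.trans hxy, hy⟩ ht.2)
    simpa [smul_eq_mul] using this
  -- positivity of B(1/2)
  have hc : 0 < ∫ w in (0:ℝ)..(1/2:ℝ), b w := by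
    have h1 : (∫ x in (0:ℝ)..(1/2:ℝ), b (1/2)) < ∫ x in (0:ℝ)..(1/2:ℝ), b x := by
      apply intervalIntegral.integral_lt_integral_of_continuousOn_of_le_of_exists_lt
        (by norm_num) continuousOn_const (hcont.mono (Icc_subset_Icc le_rfl (by norm_num)))
      · intro x hx
        rcases eq_or_lt_of_le hx.2 with h | h
        · rw [h]
        · exact (hanti ⟨hx.1.le, by linarith⟩ ⟨by norm_num, by norm_num⟩ h).le
      · exact ⟨1/4, ⟨by norm_num, by norm_num⟩,
          hanti ⟨by norm_num, by norm_num⟩ ⟨by norm_num, by norm_num⟩ (by norm_num)⟩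
    have h2 : (∫ x in (1/2:ℝ)..1, b x) < ∫ x in (1/2:ℝ)..1, b (1/2) := by
      apply intervalIntegral.integral_lt_integral_of_continuousOn_of_le_of_exists_lt
        (by norm_num) (hcont.mono (Icc_subset_Icc (by norm_num) le_rfl)) continuousOn_const
      · intro x hx
        exact (hanti ⟨by norm_num, by norm_num⟩ ⟨by linarith [hx.1], hx.2⟩ hx.1).le
      · exact ⟨1, ⟨by norm_num, le_rfl⟩,
          hanti ⟨by norm_num, by norm_num⟩ ⟨by norm_num, le_rfl⟩ (by norm_num)⟩
    have h3 : (∫ x in (0:ℝ)..(1/2:ℝ), b x) + ∫ x in (1/2:ℝ)..1, b x = 0 := by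
      rw [intervalIntegral.integral_add_adjacent_intervals
        (hbint 0 (1/2) le_rfl (by norm_num) (by norm_num))
        (hbint (1/2) 1 (by norm_num) (by norm_num) le_rfl), hB1]
    simp only [intervalIntegral.integral_const, smul_eq_mul] at h1 h2
    linarith
  -- lower bound for B
  have hlb : ∀ v ∈ Icc (0:ℝ) 1,
      2 * (∫ w in (0:ℝ)..(1/2:ℝ), b w) * (v * (1 - v)) ≤ ∫ w in (0:ℝ)..v, b w := by
    intro v hv
    rcases le_or_gt v (1/2) with hv2 | hv2
    · have h1 : v * b v ≤ ∫ t in (0:ℝ)..v, b t := by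
        have := hlow 0 v le_rfl hv.1 (le_trans hv2 (by norm_num))
        simpa using this
      have h2 : (∫ t in v..(1/2:ℝ), b t) ≤ (1/2 - v) * b v := hub v (1/2) hv.1 hv2 (by norm_num)
      have h3 : (∫ t in (0:ℝ)..v, b t) + ∫ t in v..(1/2:ℝ), b t = ∫ w in (0:ℝ)..(1/2:ℝ), b w := by
        exact intervalIntegral.integral_add_adjacent_intervals
          (hbint 0 v le_rfl hv.1 (le_trans hv2 (by norm_num)))
          (hbint v (1/2) hv.1 hv2 (by norm_num))
      set Bv := ∫ t in (0:ℝ)..v, b t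
      set X := ∫ t in v..(1/2:ℝ), b t
      have k1 : 2*v*X ≤ 2*v*((1/2 - v) * b v) :=
        mul_le_mul_of_nonneg_left h2 (by linarith [hv.1])
      have k2 : (1 - 2*v)*(v * b v) ≤ (1 - 2*v)*Bv :=
        mul_le_mul_of_nonneg_left h1 (by linarith)
      have k3 : 2*v*(Bv + X) ≤ Bv := by nlinarith [hv.1]
      rw [← h3]
      nlinarith [hv.1, hv.2, mul_nonneg (mul_nonneg hc.le hv.1) hv.1, h3, hc]
    · have h1 : (∫ t in v..(1:ℝ), b t) ≤ (1 - v) * b v := hub v 1 hv.1 hv.2 le_rfl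
      have h2 : (v - 1/2) * b v ≤ ∫ t in (1/2:ℝ)..v, b t :=
        hlow (1/2) v (by norm_num) hv2.le hv.2
      have h3 : (∫ t in (0:ℝ)..v, b t) + ∫ t in v..(1:ℝ), b t = 0 := by
        rw [intervalIntegral.integral_add_adjacent_intervals
          (hbint 0 v le_rfl hv.1 hv.2) (hbint v 1 hv.1 hv.2 le_rfl), hB1]
      have h4 : (∫ w in (0:ℝ)..(1/2:ℝ), b w) + ∫ t in (1/2:ℝ)..v, b t = ∫ t in (0:ℝ)..v, b t := by
        exact intervalIntegral.integral_add_adjacent_intervals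
          (hbint 0 (1/2) le_rfl (by norm_num) (by norm_num))
          (hbint (1/2) v (by norm_num) hv2.le hv.2)
      set Bv := ∫ t in (0:ℝ)..v, b t
      set c := ∫ w in (0:ℝ)..(1/2:ℝ), b w
      set X := ∫ t in (1/2:ℝ)..v, b t
      set Y := ∫ t in v..(1:ℝ), b t
      have k1 : (2*v - 1)*Y ≤ (2*v - 1)*((1 - v) * b v) :=
        mul_le_mul_of_nonneg_left h1 (by linarith)
      have k2 : (2*(1 - v))*((v - 1/2) * b v) ≤ (2*(1 - v))*X :=
        mul_le_mul_of_nonneg_left h2 (by linarith [hv.2])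
      have k3 : 2*(1 - v)*c ≤ Bv := by nlinarith [hv.2]
      nlinarith [hv.1, hv.2, mul_nonneg hc.le (by linarith [hv.2] : (0:ℝ) ≤ 1 - v), hc]
  set c : ℝ := ∫ w in (0:ℝ)..(1/2:ℝ), b w with hcdef
  -- PART 2
  set f : ℝ → ℝ := fun v => v * σ^2 / (2 * ∫ w in (0:ℝ)..v, b w) with hfdef
  set g : ℝ → ℝ := fun v => (1 - v) * σ^2 / (2 * ∫ w in (0:ℝ)..v, b w) with hgdef
  have hBpos : ∀ v ∈ Ioo (0:ℝ) 1, 0 < ∫ w in (0:ℝ)..v, b w := by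
    intro v hv
    have := hlb v ⟨hv.1.le, hv.2.le⟩
    nlinarith [mul_pos (mul_pos (by linarith : (0:ℝ) < 2*c) hv.1) (by linarith [hv.2] : (0:ℝ) < 1 - v)]
  have hf0 : ∀ v ∈ Ioo (0:ℝ) 1, 0 ≤ f v := by
    intro v hv
    rw [hfdef]
    exact div_nonneg (by nlinarith [hv.1]) (by linarith [hBpos v hv])
  have hg0 : ∀ v ∈ Ioo (0:ℝ) 1, 0 ≤ g v := by
    intro v hv
    rw [hgdef]
    exact div_nonneg (by nlinarith [hv.2]) (by linarith [hBpos v hv])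
  have hfb : ∀ v ∈ Ioo (0:ℝ) 1, (1 - v) * f v ≤ σ^2/(4*c) := by
    intro v hv
    have hB := hBpos v hv
    have h2B : (0:ℝ) < 2 * (∫ w in (0:ℝ)..v, b w) := by linarith
    have he : (1 - v) * f v = ((1-v)*v*σ^2)/(2 * ∫ w in (0:ℝ)..v, b w) := by
      rw [hfdef]; ring
    rw [he, div_le_div_iff₀ h2B (by positivity)]
    nlinarith [hlb v ⟨hv.1.le, hv.2.le⟩, hσ2, mul_le_mul_of_nonneg_left
      (hlb v ⟨hv.1.le, hv.2.le⟩) hσ2.le]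
  have hgb : ∀ v ∈ Ioo (0:ℝ) 1, v * g v ≤ σ^2/(4*c) := by
    intro v hv
    have hB := hBpos v hv
    have h2B : (0:ℝ) < 2 * (∫ w in (0:ℝ)..v, b w) := by linarith
    have he : v * g v = (v*(1-v)*σ^2)/(2 * ∫ w in (0:ℝ)..v, b w) := by
      rw [hgdef]; ring
    rw [he, div_le_div_iff₀ h2B (by positivity)]
    nlinarith [hlb v ⟨hv.1.le, hv.2.le⟩, hσ2, mul_le_mul_of_nonneg_left
      (hlb v ⟨hv.1.le, hv.2.le⟩) hσ2.le]
  -- continuity and measurability of f, g on Ioo 0 1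
  have hBcont : ContinuousOn (fun v => ∫ w in (0:ℝ)..v, b w) (Icc (0:ℝ) 1) := by
    have := intervalIntegral.continuousOn_primitive_interval (a := (0:ℝ)) (b := 1) (μ := volume)
      (f := b) (by rw [uIcc_of_le zero_le_one]; exact hcont.integrableOn_Icc)
    rwa [uIcc_of_le zero_le_one] at this
  have hfcont : ContinuousOn f (Ioo (0:ℝ) 1) := by
    rw [hfdef]
    exact ((continuousOn_id.mul continuousOn_const).div
      (continuousOn_const.mul (hBcont.mono Ioo_subset_Icc_self))
      (fun v hv => by have := hBpos v hv; positivity))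
  have hgcont : ContinuousOn g (Ioo (0:ℝ) 1) := by
    rw [hgdef]
    exact (((continuousOn_const.sub continuousOn_id).mul continuousOn_const).div
      (continuousOn_const.mul (hBcont.mono Ioo_subset_Icc_self))
      (fun v hv => by have := hBpos v hv; positivity))
  set μI := volume.restrict (Ioo (0:ℝ) 1) with hμI
  haveI : IsFiniteMeasure μI := by
    constructor
    rw [hμI, Measure.restrict_apply_univ, Real.volume_Ioo]
    exact ENNReal.ofReal_lt_top
  have hfm : AEMeasurable f μI := hfcont.aemeasurable measurableSet_Ioo
  have hgm : AEMeasurable g μI := hgcont.aemeasurable measurableSet_Ioo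
  -- integrability of f on Ioo 0 u, g on Ioo u 1
  have hfInt : ∀ u ∈ Ioo (0:ℝ) 1, IntegrableOn f (Ioo 0 u) volume := by
    intro u hu
    refine ⟨(hfm.mono_measure (Measure.restrict_mono (Ioo_subset_Ioo_right hu.2.le)
      le_rfl)).aestronglyMeasurable, ?_⟩
    apply HasFiniteIntegral.restrict_of_bounded (C := (σ^2/(4*c))/(1-u))
      (by rw [Real.volume_Ioo]; exact ENNReal.ofReal_lt_top)
    refine (ae_restrict_iff' measurableSet_Ioo).2 (ae_of_all _ fun v hv => ?_)
    have hv1 : v ∈ Ioo (0:ℝ) 1 := ⟨hv.1, hv.2.trans hu.2⟩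
    rw [Real.norm_eq_abs, abs_of_nonneg (hf0 v hv1)]
    rw [le_div_iff₀ (by linarith [hu.2])]
    nlinarith [hfb v hv1, hf0 v hv1, hv.2, hu.2]
  have hgInt : ∀ u ∈ Ioo (0:ℝ) 1, IntegrableOn g (Ioo u 1) volume := by
    intro u hu
    refine ⟨(hgm.mono_measure (Measure.restrict_mono (Ioo_subset_Ioo_left hu.1.le)
      le_rfl)).aestronglyMeasurable, ?_⟩
    apply HasFiniteIntegral.restrict_of_bounded (C := (σ^2/(4*c))/u)
      (by rw [Real.volume_Ioo]; exact ENNReal.ofReal_lt_top)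
    refine (ae_restrict_iff' measurableSet_Ioo).2 (ae_of_all _ fun v hv => ?_)
    have hv1 : v ∈ Ioo (0:ℝ) 1 := ⟨hu.1.trans hv.1, hv.2⟩
    rw [Real.norm_eq_abs, abs_of_nonneg (hg0 v hv1)]
    rw [le_div_iff₀ hu.1]
    nlinarith [hgb v hv1, hg0 v hv1, hv.1, hu.1]
  -- the kernel
  set K : ℝ × ℝ → ℝ :=
    fun p => {q : ℝ × ℝ | q.2 < q.1}.indicator (fun q => f q.2 + g q.2) p - g p.2 with hKdef
  have hKval : ∀ u v : ℝ, K (u, v) = if v < u then f v else -(g v) := by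
    intro u v
    by_cases h : v < u
    · simp [hKdef, Set.indicator, h]
    · simp [hKdef, Set.indicator, h]
  have hs : MeasurableSet {q : ℝ × ℝ | q.2 < q.1} := measurableSet_lt measurable_snd measurable_fst
  have hKm : AEStronglyMeasurable K (μI.prod μI) := by
    rw [hKdef]
    exact ((((hfm.add hgm).aestronglyMeasurable.comp_snd (μ := μI)).indicator hs).sub
      (hgm.aestronglyMeasurable.comp_snd (μ := μI)))
  -- sections in u
  have hsec : ∀ v : ℝ, (fun u => K (u, v))
      = fun u => (Ioi v).indicator (fun _ => f v + g v) u - g v := by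
    intro v; funext u
    by_cases h : v < u
    · simp [hKdef, Set.indicator, h]
    · simp [hKdef, Set.indicator, h]
  have hμIoi : ∀ v ∈ Ioo (0:ℝ) 1, (μI (Ioi v)).toReal = 1 - v := by
    intro v hv
    rw [hμI, Measure.restrict_apply measurableSet_Ioi]
    have : Ioi v ∩ Ioo 0 1 = Ioo v 1 := by
      ext w
      exact ⟨fun h => ⟨h.1, h.2.2⟩, fun h => ⟨h.1, hv.1.trans h.1, h.2⟩⟩
    rw [this, Real.volume_Ioo, ENNReal.toReal_ofReal (by linarith [hv.2])]
  have hμuniv : (μI univ).toReal = 1 := by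
    rw [hμI, Measure.restrict_apply_univ, Real.volume_Ioo, ENNReal.toReal_ofReal] <;> norm_num
  have hsecint : ∀ v : ℝ, Integrable (fun u => K (u, v)) μI := by
    intro v
    rw [hsec v]
    exact ((integrable_indicator_iff measurableSet_Ioi).2
      (integrableOn_const (measure_lt_top μI _).ne)).sub (integrable_const _)
  have hseczero : ∀ v ∈ Ioo (0:ℝ) 1, ∫ u, K (u, v) ∂μI = 0 := by
    intro v hv
    rw [hsec v, integral_sub ((integrable_indicator_iff measurableSet_Ioi).2
      (integrableOn_const (measure_lt_top μI _).ne)) (integrable_const _),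
      integral_indicator_const _ measurableSet_Ioi, MeasureTheory.integral_const, measureReal_def, measureReal_def, hμIoi v hv, hμuniv,
      smul_eq_mul, smul_eq_mul, hfdef, hgdef]
    have hB := hBpos v hv
    field_simp
    ring
  have hsecnorm : ∀ v ∈ Ioo (0:ℝ) 1,
      ∫ u, ‖K (u, v)‖ ∂μI = (1 - v) * f v + v * g v := by
    intro v hv
    have : (fun u => ‖K (u, v)‖)
        = fun u => (Ioi v).indicator (fun _ => f v - g v) u + g v := by
      funext u
      by_cases h : v < u
      · simp only [hKval, if_pos h, Set.indicator_of_mem (mem_Ioi.2 h), Real.norm_eq_abs,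
          abs_of_nonneg (hf0 v hv)]
        ring
      · simp only [hKval, if_neg h, Set.indicator_of_notMem (fun hh => h (mem_Ioi.1 hh)),
          Real.norm_eq_abs, abs_neg, abs_of_nonneg (hg0 v hv)]
        ring
    rw [this, integral_add ((integrable_indicator_iff measurableSet_Ioi).2
      (integrableOn_const (measure_lt_top μI _).ne)) (integrable_const _),
      integral_indicator_const _ measurableSet_Ioi, MeasureTheory.integral_const, measureReal_def, measureReal_def, hμIoi v hv, hμuniv,
      smul_eq_mul, smul_eq_mul]
    ring
  -- K is integrable on the product
  have hKint : Integrable K (μI.prod μI) := by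
    rw [integrable_prod_iff' hKm]
    refine ⟨ae_of_all _ hsecint, ?_⟩
    have hAESM : AEStronglyMeasurable (fun v => ∫ u, ‖K (u, v)‖ ∂μI) μI :=
      hKm.prod_swap.norm.integral_prod_right'
    refine Integrable.mono' (integrable_const (σ^2/(4*c) + σ^2/(4*c))) hAESM ?_
    refine (ae_restrict_iff' measurableSet_Ioo).2 (ae_of_all _ fun v hv => ?_)
    rw [hsecnorm v hv, Real.norm_eq_abs, abs_of_nonneg (by
      nlinarith [hf0 v hv, hg0 v hv, hv.1, hv.2])]
    have := hfb v hv; have := hgb v hv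
    linarith
  -- relation between Φ and K
  have hΦeq : ∀ u ∈ Ioo (0:ℝ) 1, Φ u = ∫ v, K (u, v) ∂μI := by
    intro u hu
    have hsplit : Ioo (0:ℝ) 1 = Ioo 0 u ∪ Ico u 1 := (Ioo_union_Ico_eq_Ioo hu.1 hu.2.le).symm
    have hdisj : Disjoint (Ioo (0:ℝ) u) (Ico u 1) :=
      Set.disjoint_left.2 fun v hv1 hv2 => absurd hv2.1 (not_le.2 hv1.2)
    have hint1 : IntegrableOn (fun v => K (u, v)) (Ioo 0 u) volume := by
      refine (hfInt u hu).congr_fun (fun v hv => ?_) measurableSet_Ioo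
      rw [hKval, if_pos hv.2]
    have hint2 : IntegrableOn (fun v => K (u, v)) (Ico u 1) volume := by
      refine IntegrableOn.congr_set_ae ?_ Ioo_ae_eq_Ico.symm
      have hng : IntegrableOn (fun v => -(g v)) (Ioo u 1) volume := (hgInt u hu).neg
      refine hng.congr_fun (fun v hv => ?_) measurableSet_Ioo
      rw [hKval, if_neg (not_lt.2 hv.1.le)]
    have hv1 : ∫ v, K (u, v) ∂μI
        = (∫ v in Ioo (0:ℝ) u, K (u, v)) + ∫ v in Ico u 1, K (u, v) := by
      rw [hμI, hsplit]
      exact setIntegral_union hdisj measurableSet_Ico hint1 hint2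
    have hv2 : ∫ v in Ioo (0:ℝ) u, K (u, v) = ∫ v in Ioo (0:ℝ) u, f v := by
      refine setIntegral_congr_fun measurableSet_Ioo (fun v hv => ?_)
      rw [hKval, if_pos hv.2]
    have hv3 : ∫ v in Ico u 1, K (u, v) = - ∫ v in Ioo u 1, g v := by
      rw [integral_Ico_eq_integral_Ioo, ← MeasureTheory.integral_neg]
      refine setIntegral_congr_fun measurableSet_Ioo (fun v hv => ?_)
      rw [hKval, if_neg (not_lt.2 hv.1.le)]
    have hl1 : (∫ v in (0:ℝ)..u, f v) = ∫ v in Ioo (0:ℝ) u, f v := by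
      rw [intervalIntegral.integral_of_le hu.1.le, integral_Ioc_eq_integral_Ioo]
    have hl2 : (∫ v in u..(1:ℝ), g v) = ∫ v in Ioo u 1, g v := by
      rw [intervalIntegral.integral_of_le hu.2.le, integral_Ioc_eq_integral_Ioo]
    rw [hΦ u, hv1, hv2, hv3, hl1, hl2]
    ring
  -- conclusion
  have haeeq : (fun u => ∫ v, K (u, v) ∂μI) =ᵐ[μI] Φ :=
    (ae_restrict_iff' measurableSet_Ioo).2 (ae_of_all _ fun u hu => (hΦeq u hu).symm)
  constructor
  · exact (hKint.integral_prod_left).congr haeeq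
  · have h1 : ∫ u in Ioo (0:ℝ) 1, Φ u = ∫ u, (∫ v, K (u, v) ∂μI) ∂μI :=
      (integral_congr_ae haeeq).symm
    have h2 : ∫ u, (∫ v, K (u, v) ∂μI) ∂μI = ∫ v, (∫ u, K (u, v) ∂μI) ∂μI :=
      integral_integral_swap hKint
    have h3 : ∫ v, (∫ u, K (u, v) ∂μI) ∂μI = 0 := by
      rw [integral_congr_ae ((ae_restrict_iff' measurableSet_Ioo).2
        (ae_of_all _ fun v hv => hseczero v hv)), MeasureTheory.integral_zero]
    rw [h1, h2, h3]
end

section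
/- For r in the interval (−2b(0)/σ², −2b(1)/σ²), the Laplace transform of P∞ is finite and equals L∞(r) = ∫₀¹ exp(r Φ(u)) du. -/
open MeasureTheory intervalIntegral Set

namespace Stmt10Aux

noncomputable def Bf (b : ℝ → ℝ) (v : ℝ) : ℝ := ∫ w in (0:ℝ)..v, b w
noncomputable def g1 (b : ℝ → ℝ) (σ : ℝ) (v : ℝ) : ℝ := v * σ^2 / (2 * Bf b v)
noncomputable def g2 (b : ℝ → ℝ) (σ : ℝ) (v : ℝ) : ℝ := (1 - v) * σ^2 / (2 * Bf b v)
noncomputable def Phi (b : ℝ → ℝ) (σ : ℝ) (u : ℝ) : ℝ :=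
  (∫ v in (0:ℝ)..u, g1 b σ v) - ∫ v in u..(1:ℝ), g2 b σ v

variable {b : ℝ → ℝ} {σ : ℝ}

lemma bii (hcont : ContinuousOn b (Set.Icc 0 1)) {x y : ℝ} (hx : x ∈ Icc (0:ℝ) 1)
    (hy : y ∈ Icc (0:ℝ) 1) : IntervalIntegrable b volume x y :=
  (hcont.mono (uIcc_subset_Icc hx hy)).intervalIntegrable

lemma hb0 (hcont : ContinuousOn b (Set.Icc 0 1)) (hanti : StrictAntiOn b (Set.Icc 0 1))
    (hB1 : ∫ v in (0:ℝ)..1, b v = 0) : 0 < b 0 := by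
  by_contra h
  push_neg at h
  have h2 : (∫ v in (0:ℝ)..1, b v) < ∫ v in (0:ℝ)..1, (0:ℝ) := by
    apply integral_lt_integral_of_continuousOn_of_le_of_exists_lt one_pos hcont
      continuousOn_const
    · intro x hx
      have : b x < b 0 := hanti (by norm_num) ⟨hx.1.le, hx.2⟩ hx.1
      linarith
    · exact ⟨1, by norm_num, by
        have : b 1 < b 0 := hanti (by norm_num) (by norm_num) one_pos
        linarith⟩
  simp [hB1] at h2

lemma hb1 (hcont : ContinuousOn b (Set.Icc 0 1)) (hanti : StrictAntiOn b (Set.Icc 0 1))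
    (hB1 : ∫ v in (0:ℝ)..1, b v = 0) : b 1 < 0 := by
  by_contra h
  push_neg at h
  have h2 : (∫ v in (0:ℝ)..1, (0:ℝ)) < ∫ v in (0:ℝ)..1, b v := by
    apply integral_lt_integral_of_continuousOn_of_le_of_exists_lt one_pos
      continuousOn_const hcont
    · intro x hx
      have : b 1 ≤ b x := (hanti.antitoneOn ⟨hx.1.le, hx.2⟩ (by norm_num) hx.2)
      linarith
    · exact ⟨0, by norm_num, by
        have : b 1 < b 0 := hanti (by norm_num) (by norm_num) one_pos
        linarith⟩
  simp [hB1] at h2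

lemma Bsplit (hcont : ContinuousOn b (Set.Icc 0 1)) (hB1 : ∫ v in (0:ℝ)..1, b v = 0)
    {v : ℝ} (hv : v ∈ Icc (0:ℝ) 1) : Bf b v = - ∫ w in v..(1:ℝ), b w := by
  have h0 : (0:ℝ) ∈ Icc (0:ℝ) 1 := ⟨le_refl _, zero_le_one⟩
  have h1 : (1:ℝ) ∈ Icc (0:ℝ) 1 := ⟨zero_le_one, le_refl _⟩
  have h := integral_add_adjacent_intervals (bii hcont h0 hv) (bii hcont hv h1)
  rw [hB1] at h
  unfold Bf
  linarith [h]

lemma Bpos (hcont : ContinuousOn b (Set.Icc 0 1)) (hanti : StrictAntiOn b (Set.Icc 0 1))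
    (hB1 : ∫ v in (0:ℝ)..1, b v = 0) {v : ℝ} (hv : v ∈ Ioo (0:ℝ) 1) : 0 < Bf b v := by
  obtain ⟨hv0, hv1⟩ := hv
  have hvI : v ∈ Icc (0:ℝ) 1 := ⟨hv0.le, hv1.le⟩
  have h1 : (∫ x in (0:ℝ)..v, b v) < ∫ x in (0:ℝ)..v, b x := by
    apply integral_lt_integral_of_continuousOn_of_le_of_exists_lt hv0
      continuousOn_const (hcont.mono (Icc_subset_Icc le_rfl hv1.le))
    · intro x hx
      exact hanti.antitoneOn ⟨hx.1.le, le_trans hx.2 hv1.le⟩ hvI hx.2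
    · exact ⟨0, by constructor <;> norm_num [hv0.le], hanti (by norm_num) hvI hv0⟩
  have h2 : (∫ x in v..(1:ℝ), b x) < ∫ x in v..(1:ℝ), b v := by
    apply integral_lt_integral_of_continuousOn_of_le_of_exists_lt hv1
      (hcont.mono (Icc_subset_Icc hv0.le le_rfl)) continuousOn_const
    · intro x hx
      exact hanti.antitoneOn hvI ⟨le_trans hv0.le hx.1.le, hx.2⟩ hx.1.le
    · exact ⟨1, by constructor <;> norm_num [hv1.le], hanti hvI (by norm_num) hv1⟩
  rw [intervalIntegral.integral_const] at h1 h2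
  simp only [smul_eq_mul, sub_zero] at h1 h2
  have hsp := Bsplit hcont hB1 hvI
  have hB2 : -((1 - v) * b v) < Bf b v := by rw [hsp]; linarith
  have hB3 : v * b v < Bf b v := by unfold Bf; linarith
  nlinarith [hB2, hB3, hv0, hv1]

lemma Bnonneg (hcont : ContinuousOn b (Set.Icc 0 1)) (hanti : StrictAntiOn b (Set.Icc 0 1))
    (hB1 : ∫ v in (0:ℝ)..1, b v = 0) {v : ℝ} (hv : v ∈ Icc (0:ℝ) 1) : 0 ≤ Bf b v := by
  rcases eq_or_lt_of_le hv.1 with h0 | h0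
  · simp [Bf, ← h0]
  rcases eq_or_lt_of_le hv.2 with h1 | h1
  · rw [show v = 1 from h1]; unfold Bf; rw [hB1]
  exact (Bpos hcont hanti hB1 ⟨h0, h1⟩).le

lemma Bcont (hcont : ContinuousOn b (Set.Icc 0 1)) : ContinuousOn (Bf b) (Icc 0 1) := by
  have h : IntegrableOn b (uIcc (0:ℝ) 1) volume := by
    rw [uIcc_of_le zero_le_one]
    exact hcont.integrableOn_Icc
  show ContinuousOn (fun x => ∫ t in (0:ℝ)..x, b t) (Icc 0 1)
  simpa [uIcc_of_le zero_le_one] using continuousOn_primitive_interval (a := (0:ℝ)) (b := 1) h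


lemma exists_near0 (hcont : ContinuousOn b (Set.Icc 0 1)) {m : ℝ} (hm : m < b 0) :
    ∃ d, d ∈ Ioc (0:ℝ) (1/2) ∧ m < b d := by
  have h0 : (0:ℝ) ∈ Icc (0:ℝ) 1 := ⟨le_refl _, zero_le_one⟩
  have hE : ∀ᶠ x in nhdsWithin 0 (Icc (0:ℝ) 1), m < b x :=
    (hcont 0 h0).eventually (eventually_gt_nhds hm)
  have hle : nhdsWithin (0:ℝ) (Ioc 0 (1/2)) ≤ nhdsWithin 0 (Icc 0 1) :=
    nhdsWithin_mono _ (fun x hx => ⟨hx.1.le, le_trans hx.2 (by norm_num)⟩)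
  have hnb : (nhdsWithin (0:ℝ) (Ioc 0 (1/2))).NeBot := by
    rw [← mem_closure_iff_nhdsWithin_neBot, closure_Ioc (by norm_num : (0:ℝ) ≠ 1/2)]
    exact ⟨le_refl _, by norm_num⟩
  obtain ⟨d, hd1, hd2⟩ := ((hE.filter_mono hle).and eventually_mem_nhdsWithin).exists
  exact ⟨d, hd2, hd1⟩

lemma exists_near1 (hcont : ContinuousOn b (Set.Icc 0 1)) {m : ℝ} (hm : b 1 < m) :
    ∃ d, d ∈ Ico (1/2 : ℝ) 1 ∧ b d < m := by
  have h1 : (1:ℝ) ∈ Icc (0:ℝ) 1 := ⟨zero_le_one, le_refl _⟩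
  have hE : ∀ᶠ x in nhdsWithin 1 (Icc (0:ℝ) 1), b x < m :=
    (hcont 1 h1).eventually (eventually_lt_nhds hm)
  have hle : nhdsWithin (1:ℝ) (Ico (1/2) 1) ≤ nhdsWithin 1 (Icc 0 1) :=
    nhdsWithin_mono _ (fun x hx => ⟨le_trans (by norm_num) hx.1, hx.2.le⟩)
  have hnb : (nhdsWithin (1:ℝ) (Ico (1/2:ℝ) 1)).NeBot := by
    rw [← mem_closure_iff_nhdsWithin_neBot, closure_Ico (by norm_num : (1/2:ℝ) ≠ 1)]
    exact ⟨by norm_num, le_refl _⟩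
  obtain ⟨d, hd1, hd2⟩ := ((hE.filter_mono hle).and eventually_mem_nhdsWithin).exists
  exact ⟨d, hd2, hd1⟩

lemma Bge0 (hcont : ContinuousOn b (Set.Icc 0 1)) (hanti : StrictAntiOn b (Set.Icc 0 1))
    {d v : ℝ} (hd : d ∈ Icc (0:ℝ) 1) (hv : v ∈ Icc (0:ℝ) d) : v * b d ≤ Bf b v := by
  have hvI : v ∈ Icc (0:ℝ) 1 := ⟨hv.1, le_trans hv.2 hd.2⟩
  have h : (∫ x in (0:ℝ)..v, b d) ≤ ∫ x in (0:ℝ)..v, b x := by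
    apply integral_mono_on hv.1 (intervalIntegrable_const) (bii hcont ⟨le_refl _, zero_le_one⟩ hvI)
    intro x hx
    exact hanti.antitoneOn ⟨hx.1, le_trans hx.2 hvI.2⟩ hd (le_trans hx.2 hv.2)
  simpa [Bf] using h

lemma Bge1 (hcont : ContinuousOn b (Set.Icc 0 1)) (hanti : StrictAntiOn b (Set.Icc 0 1))
    (hB1 : ∫ v in (0:ℝ)..1, b v = 0)
    {d v : ℝ} (hd : d ∈ Icc (0:ℝ) 1) (hv : v ∈ Icc d 1) : (1 - v) * (- b d) ≤ Bf b v := by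
  have hvI : v ∈ Icc (0:ℝ) 1 := ⟨le_trans hd.1 hv.1, hv.2⟩
  have h1 : (1:ℝ) ∈ Icc (0:ℝ) 1 := ⟨zero_le_one, le_refl _⟩
  have h : (∫ x in v..(1:ℝ), b x) ≤ ∫ x in v..(1:ℝ), b d := by
    apply integral_mono_on hv.2 (bii hcont hvI h1) (intervalIntegrable_const)
    intro x hx
    exact hanti.antitoneOn hd ⟨le_trans hvI.1 hx.1, hx.2⟩ (le_trans hv.1 hx.1)
  rw [Bsplit hcont hB1 hvI]
  rw [intervalIntegral.integral_const] at h
  simp only [smul_eq_mul] at h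
  nlinarith [h]

lemma contg1 (hcont : ContinuousOn b (Set.Icc 0 1)) (hanti : StrictAntiOn b (Set.Icc 0 1))
    (hB1 : ∫ v in (0:ℝ)..1, b v = 0) : ContinuousOn (g1 b σ) (Ioo 0 1) := by
  apply ContinuousOn.div
  · exact (continuous_id.mul continuous_const).continuousOn
  · exact continuousOn_const.mul ((Bcont hcont).mono Ioo_subset_Icc_self)
  · intro v hv
    have := Bpos hcont hanti hB1 hv
    positivity

lemma contg2 (hcont : ContinuousOn b (Set.Icc 0 1)) (hanti : StrictAntiOn b (Set.Icc 0 1))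
    (hB1 : ∫ v in (0:ℝ)..1, b v = 0) : ContinuousOn (g2 b σ) (Ioo 0 1) := by
  apply ContinuousOn.div
  · exact ((continuous_const.sub continuous_id).mul continuous_const).continuousOn
  · exact continuousOn_const.mul ((Bcont hcont).mono Ioo_subset_Icc_self)
  · intro v hv
    have := Bpos hcont hanti hB1 hv
    positivity

lemma g1nonneg (hcont : ContinuousOn b (Set.Icc 0 1)) (hanti : StrictAntiOn b (Set.Icc 0 1))
    (hB1 : ∫ v in (0:ℝ)..1, b v = 0) {v : ℝ} (hv : v ∈ Icc (0:ℝ) 1) : 0 ≤ g1 b σ v := by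
  have h := Bnonneg hcont hanti hB1 hv
  have := hv.1
  unfold g1; positivity

lemma g2nonneg (hcont : ContinuousOn b (Set.Icc 0 1)) (hanti : StrictAntiOn b (Set.Icc 0 1))
    (hB1 : ∫ v in (0:ℝ)..1, b v = 0) {v : ℝ} (hv : v ∈ Icc (0:ℝ) 1) : 0 ≤ g2 b σ v := by
  have h := Bnonneg hcont hanti hB1 hv
  have h2 : (0:ℝ) ≤ 1 - v := by linarith [hv.2]
  unfold g2; positivity


lemma g1bound (hcont : ContinuousOn b (Set.Icc 0 1)) (hanti : StrictAntiOn b (Set.Icc 0 1))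
    {d v : ℝ} (hd : d ∈ Icc (0:ℝ) 1) (hbd : 0 < b d) (hv : v ∈ Ioc (0:ℝ) d) :
    g1 b σ v ≤ σ^2 / (2 * b d) := by
  have hB : v * b d ≤ Bf b v := Bge0 hcont hanti hd ⟨hv.1.le, hv.2⟩
  have hvpos := hv.1
  have hden : 0 < 2 * (v * b d) := by positivity
  have hden2 : 0 < 2 * Bf b v := lt_of_lt_of_le hden (by linarith)
  unfold g1
  rw [div_le_div_iff₀ hden2 (by linarith)]
  have hσ2 : (0:ℝ) ≤ σ^2 := sq_nonneg σ
  nlinarith [mul_le_mul_of_nonneg_left hB (mul_nonneg (by norm_num : (0:ℝ) ≤ 2) hσ2)]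

lemma g2bound (hcont : ContinuousOn b (Set.Icc 0 1)) (hanti : StrictAntiOn b (Set.Icc 0 1))
    (hB1 : ∫ v in (0:ℝ)..1, b v = 0)
    {d v : ℝ} (hd : d ∈ Icc (0:ℝ) 1) (hbd : b d < 0) (hv : v ∈ Ico d 1) :
    g2 b σ v ≤ σ^2 / (2 * (- b d)) := by
  have hB : (1 - v) * (- b d) ≤ Bf b v := Bge1 hcont hanti hB1 hd ⟨hv.1, hv.2.le⟩
  have h1v : 0 < 1 - v := by linarith [hv.2]
  have hden : 0 < 2 * ((1 - v) * (- b d)) := by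
    have : 0 < - b d := by linarith
    positivity
  have hden2 : 0 < 2 * Bf b v := lt_of_lt_of_le hden (by linarith)
  unfold g2
  rw [div_le_div_iff₀ hden2 (by linarith)]
  have hσ2 : (0:ℝ) ≤ σ^2 := sq_nonneg σ
  nlinarith [mul_le_mul_of_nonneg_left hB (mul_nonneg (by norm_num : (0:ℝ) ≤ 2) hσ2)]

lemma g1int (hcont : ContinuousOn b (Set.Icc 0 1)) (hanti : StrictAntiOn b (Set.Icc 0 1))
    (hB1 : ∫ v in (0:ℝ)..1, b v = 0) {u : ℝ} (hu : u ∈ Ioo (0:ℝ) 1) :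
    IntervalIntegrable (g1 b σ) volume 0 u := by
  obtain ⟨d, hd, hbd⟩ := exists_near0 hcont (hb0 hcont hanti hB1)
  set d' := min d u with hd'
  have hd'0 : 0 < d' := lt_min hd.1 hu.1
  have hd'1 : d' < 1 := lt_of_le_of_lt (min_le_right _ _) hu.2
  have hd'I : d' ∈ Icc (0:ℝ) 1 := ⟨hd'0.le, hd'1.le⟩
  have hbd' : 0 < b d' := lt_of_lt_of_le hbd
    (hanti.antitoneOn hd'I ⟨le_trans hd'0.le (min_le_left _ _), le_trans hd.2 (by norm_num)⟩
      (min_le_left _ _))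
  have hI1 : IntegrableOn (g1 b σ) (Ioc 0 d') volume := by
    apply Integrable.mono' (g := fun _ => σ^2 / (2 * b d'))
      (integrable_const _)
    · exact ((contg1 hcont hanti hB1).mono
        (fun x hx => ⟨hx.1, lt_of_le_of_lt hx.2 hd'1⟩)).aestronglyMeasurable measurableSet_Ioc
    · refine (ae_restrict_iff' measurableSet_Ioc).2 (Filter.Eventually.of_forall fun v hv => ?_)
      rw [Real.norm_eq_abs, abs_of_nonneg (g1nonneg hcont hanti hB1
        ⟨hv.1.le, le_trans hv.2 hd'1.le⟩)]
      exact g1bound hcont hanti hd'I hbd' hv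
  have hI2 : IntegrableOn (g1 b σ) (Ioc d' u) volume := by
    apply ((contg1 hcont hanti hB1).mono ?_).integrableOn_Icc.mono_set Ioc_subset_Icc_self
    intro x hx
    exact ⟨lt_of_lt_of_le hd'0 hx.1, lt_of_le_of_lt hx.2 hu.2⟩
  rw [intervalIntegrable_iff_integrableOn_Ioc_of_le (le_of_lt hu.1)]
  have : Ioc (0:ℝ) u ⊆ Ioc 0 d' ∪ Ioc d' u := by
    rw [Ioc_union_Ioc_eq_Ioc hd'0.le (min_le_right _ _)]
  exact (hI1.union hI2).mono_set this

lemma g2int (hcont : ContinuousOn b (Set.Icc 0 1)) (hanti : StrictAntiOn b (Set.Icc 0 1))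
    (hB1 : ∫ v in (0:ℝ)..1, b v = 0) {u : ℝ} (hu : u ∈ Ioo (0:ℝ) 1) :
    IntervalIntegrable (g2 b σ) volume u 1 := by
  obtain ⟨d, hd, hbd⟩ := exists_near1 hcont (hb1 hcont hanti hB1)
  set d' := max d u with hd'
  have hd'0 : 0 < d' := lt_of_lt_of_le hu.1 (le_max_right _ _)
  have hd'1 : d' < 1 := max_lt hd.2 hu.2
  have hd'I : d' ∈ Icc (0:ℝ) 1 := ⟨hd'0.le, hd'1.le⟩
  have hbd' : b d' < 0 := lt_of_le_of_lt
    (hanti.antitoneOn ⟨le_trans (by norm_num) hd.1, hd.2.le⟩ hd'I (le_max_left _ _)) hbd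
  have hI1 : IntegrableOn (g2 b σ) (Ioo d' 1) volume := by
    apply Integrable.mono' (g := fun _ => σ^2 / (2 * (- b d')))
      (integrable_const _)
    · exact ((contg2 hcont hanti hB1).mono
        (fun x hx => ⟨lt_trans hd'0 hx.1, hx.2⟩)).aestronglyMeasurable measurableSet_Ioo
    · refine (ae_restrict_iff' measurableSet_Ioo).2 (Filter.Eventually.of_forall fun v hv => ?_)
      rw [Real.norm_eq_abs, abs_of_nonneg (g2nonneg hcont hanti hB1
        ⟨le_trans hd'0.le hv.1.le, hv.2.le⟩)]
      exact g2bound hcont hanti hB1 hd'I hbd' ⟨hv.1.le, hv.2⟩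
  have hI1' : IntegrableOn (g2 b σ) (Ioc d' 1) volume :=
    (integrableOn_Ioc_iff_integrableOn_Ioo (by simp)).2 hI1
  have hI2 : IntegrableOn (g2 b σ) (Ioc u d') volume := by
    apply ((contg2 hcont hanti hB1).mono ?_).integrableOn_Icc.mono_set Ioc_subset_Icc_self
    intro x hx
    exact ⟨lt_of_lt_of_le hu.1 hx.1, lt_of_le_of_lt hx.2 hd'1⟩
  rw [intervalIntegrable_iff_integrableOn_Ioc_of_le (le_of_lt hu.2)]
  have : Ioc u (1:ℝ) ⊆ Ioc u d' ∪ Ioc d' 1 := by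
    rw [Ioc_union_Ioc_eq_Ioc (le_max_right _ _) hd'1.le]
  exact (hI2.union hI1').mono_set this

lemma uIccsub {a u : ℝ} (ha : a ∈ Ioo (0:ℝ) 1) (hu : u ∈ Ioo (0:ℝ) 1) :
    uIcc a u ⊆ Ioo (0:ℝ) 1 := fun x hx =>
  ⟨lt_of_lt_of_le (lt_min ha.1 hu.1) hx.1, lt_of_le_of_lt hx.2 (max_lt ha.2 hu.2)⟩

lemma phi_rep (hcont : ContinuousOn b (Set.Icc 0 1)) (hanti : StrictAntiOn b (Set.Icc 0 1))
    (hB1 : ∫ v in (0:ℝ)..1, b v = 0) {a u : ℝ} (ha : a ∈ Ioo (0:ℝ) 1) (hu : u ∈ Ioo (0:ℝ) 1) :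
    Phi b σ u = Phi b σ a + ∫ v in a..u, (g1 b σ v + g2 b σ v) := by
  have hsub := uIccsub ha hu
  have h1 : IntervalIntegrable (g1 b σ) volume a u :=
    ((contg1 hcont hanti hB1).mono hsub).intervalIntegrable
  have h2 : IntervalIntegrable (g2 b σ) volume a u :=
    ((contg2 hcont hanti hB1).mono hsub).intervalIntegrable
  have hA : (∫ v in (0:ℝ)..a, g1 b σ v) + ∫ v in a..u, g1 b σ v = ∫ v in (0:ℝ)..u, g1 b σ v :=
    integral_add_adjacent_intervals (g1int hcont hanti hB1 ha) h1
  have hC : (∫ v in a..u, g2 b σ v) + ∫ v in u..(1:ℝ), g2 b σ v = ∫ v in a..(1:ℝ), g2 b σ v :=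
    integral_add_adjacent_intervals h2 (g2int hcont hanti hB1 hu)
  have hsum : (∫ v in a..u, (g1 b σ v + g2 b σ v)) =
      (∫ v in a..u, g1 b σ v) + ∫ v in a..u, g2 b σ v := integral_add h1 h2
  unfold Phi
  rw [hsum]
  linarith [hA, hC]

lemma contPhi (hcont : ContinuousOn b (Set.Icc 0 1)) (hanti : StrictAntiOn b (Set.Icc 0 1))
    (hB1 : ∫ v in (0:ℝ)..1, b v = 0) : ContinuousOn (Phi b σ) (Ioo 0 1) := by
  intro u₀ hu₀
  apply ContinuousAt.continuousWithinAt
  set a := u₀ / 2 with ha_def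
  set c := (1 + u₀) / 2 with hc_def
  have haI : a ∈ Ioo (0:ℝ) 1 := ⟨by simp only [ha_def]; linarith [hu₀.1], by
    simp only [ha_def]; linarith [hu₀.2]⟩
  have hac : a < c := by simp only [ha_def, hc_def]; linarith [hu₀.1, hu₀.2]
  have haub : a < u₀ := by simp only [ha_def]; linarith [hu₀.1]
  have hu₀c : u₀ < c := by simp only [hc_def]; linarith [hu₀.2]
  have hcI : c ∈ Ioo (0:ℝ) 1 := ⟨by simp only [hc_def]; linarith [hu₀.1], by
    simp only [hc_def]; linarith [hu₀.2]⟩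
  have hIcc : Icc a c ⊆ Ioo (0:ℝ) 1 := fun x hx =>
    ⟨lt_of_lt_of_le haI.1 hx.1, lt_of_le_of_lt hx.2 hcI.2⟩
  have hint : IntegrableOn (fun v => g1 b σ v + g2 b σ v) (uIcc a c) volume := by
    rw [uIcc_of_le hac.le]
    exact (((contg1 hcont hanti hB1).mono hIcc).add
      ((contg2 hcont hanti hB1).mono hIcc)).integrableOn_Icc
  have hcont2 : ContinuousOn (fun u => Phi b σ a + ∫ v in a..u, (g1 b σ v + g2 b σ v))
      (Icc a c) := by
    have := continuousOn_primitive_interval (a := a) (b := c)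
      (f := fun v => g1 b σ v + g2 b σ v) (μ := volume) hint
    rw [uIcc_of_le hac.le] at this
    exact continuousOn_const.add this
  have hca : ContinuousAt (fun u => Phi b σ a + ∫ v in a..u, (g1 b σ v + g2 b σ v)) u₀ :=
    hcont2.continuousAt (Icc_mem_nhds haub hu₀c)
  apply hca.congr
  apply Filter.eventuallyEq_of_mem (Ioo_mem_nhds haub hu₀c)
  intro u hu
  exact (phi_rep hcont hanti hB1 haI (hIcc (Ioo_subset_Icc_self hu))).symm


lemma half (hσ : σ ≠ 0) (hcont : ContinuousOn b (Set.Icc 0 1))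
    (hanti : StrictAntiOn b (Set.Icc 0 1)) (hB1 : ∫ v in (0:ℝ)..1, b v = 0)
    {r : ℝ} (hr0 : -2 * b 0 / σ^2 < r) :
    IntegrableOn (fun u => Real.exp (r * Phi b σ u)) (Ioc 0 (1/2)) volume := by
  have hσ2 : 0 < σ^2 := by positivity
  have hb0' := hb0 hcont hanti hB1
  have hm : -r * σ^2 / 2 < b 0 := by
    rw [div_lt_iff₀ hσ2] at hr0
    nlinarith
  obtain ⟨d, hd, hbd⟩ := exists_near0 hcont (show max (-r * σ^2 / 2) 0 < b 0 from max_lt hm hb0')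
  have hbdpos : 0 < b d := lt_of_le_of_lt (le_max_right _ _) hbd
  have hbdm : -r * σ^2 / 2 < b d := lt_of_le_of_lt (le_max_left _ _) hbd
  have hdI : d ∈ Ioo (0:ℝ) 1 := ⟨hd.1, lt_of_le_of_lt hd.2 (by norm_num)⟩
  have hdIcc : d ∈ Icc (0:ℝ) 1 := ⟨hd.1.le, hdI.2.le⟩
  have contExp : ContinuousOn (fun u => Real.exp (r * Phi b σ u)) (Ioo 0 1) :=
    Real.continuous_exp.comp_continuousOn (continuousOn_const.mul (contPhi hcont hanti hB1))
  have hmeas : AEStronglyMeasurable (fun u => Real.exp (r * Phi b σ u))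
      (volume.restrict (Ioc 0 d)) :=
    (contExp.mono (fun x hx => ⟨hx.1, lt_of_le_of_lt hx.2 hdI.2⟩)).aestronglyMeasurable
      measurableSet_Ioc
  have hmid : IntegrableOn (fun u => Real.exp (r * Phi b σ u)) (Ioc d (1/2)) volume := by
    apply ((contExp.mono ?_)).integrableOn_Icc.mono_set Ioc_subset_Icc_self
    intro x hx
    exact ⟨lt_of_lt_of_le hd.1 hx.1, lt_of_le_of_lt hx.2 (by norm_num)⟩
  have hnear : IntegrableOn (fun u => Real.exp (r * Phi b σ u)) (Ioc 0 d) volume := by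
    rcases le_or_gt 0 r with hrpos | hrneg
    · -- r nonnegative : bounded by exp (r * A d)
      have hbound : ∀ u ∈ Ioc (0:ℝ) d, Phi b σ u ≤ ∫ v in (0:ℝ)..d, g1 b σ v := by
        intro u hu
        have huI : u ∈ Ioo (0:ℝ) 1 := ⟨hu.1, lt_of_le_of_lt hu.2 hdI.2⟩
        have hAspl : (∫ v in (0:ℝ)..u, g1 b σ v) + ∫ v in u..d, g1 b σ v
            = ∫ v in (0:ℝ)..d, g1 b σ v :=
          integral_add_adjacent_intervals (g1int hcont hanti hB1 huI)
            (((contg1 hcont hanti hB1).mono (uIccsub huI hdI)).intervalIntegrable)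
        have h2 : 0 ≤ ∫ v in u..d, g1 b σ v := by
          apply integral_nonneg hu.2
          intro x hx
          exact g1nonneg hcont hanti hB1 ⟨le_trans hu.1.le hx.1, le_trans hx.2 hdI.2.le⟩
        have h3 : 0 ≤ ∫ v in u..(1:ℝ), g2 b σ v := by
          apply integral_nonneg huI.2.le
          intro x hx
          exact g2nonneg hcont hanti hB1 ⟨le_trans hu.1.le hx.1, hx.2⟩
        unfold Phi
        linarith
      apply Integrable.mono'
        (integrable_const (Real.exp (r * ∫ v in (0:ℝ)..d, g1 b σ v))) hmeas
      refine (ae_restrict_iff' measurableSet_Ioc).2 (Filter.Eventually.of_forall fun u hu => ?_)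
      rw [Real.norm_eq_abs, Real.abs_exp, Real.exp_le_exp]
      exact mul_le_mul_of_nonneg_left (hbound u hu) hrpos
    · -- r negative
      set cc := σ^2 / (2 * b d) with hcc_def
      have hccpos : 0 < cc := by rw [hcc_def]; positivity
      set Cd := ∫ v in d..(1:ℝ), g2 b σ v with hCd_def
      set e := r * cc with he_def
      have he : -1 < e := by
        rw [he_def, hcc_def, mul_div_assoc']
        rw [lt_div_iff₀ (by positivity : (0:ℝ) < 2 * b d)]
        nlinarith
      have hkey : ∀ u ∈ Ioc (0:ℝ) d, r * Phi b σ u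
          ≤ (-r) * (cc * Real.log d + Cd) + e * Real.log u := by
        intro u hu
        have huI : u ∈ Ioo (0:ℝ) 1 := ⟨hu.1, lt_of_le_of_lt hu.2 hdI.2⟩
        have hA : 0 ≤ ∫ v in (0:ℝ)..u, g1 b σ v := by
          apply integral_nonneg hu.1.le
          intro x hx
          exact g1nonneg hcont hanti hB1 ⟨hx.1, le_trans hx.2 huI.2.le⟩
        have hg2mid : IntervalIntegrable (g2 b σ) volume u d :=
          ((contg2 hcont hanti hB1).mono (uIccsub huI hdI)).intervalIntegrable
        have hCspl : (∫ v in u..d, g2 b σ v) + Cd = ∫ v in u..(1:ℝ), g2 b σ v :=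
          integral_add_adjacent_intervals hg2mid (g2int hcont hanti hB1 hdI)
        have hmid2 : (∫ v in u..d, g2 b σ v) ≤ cc * (Real.log d - Real.log u) := by
          have hptw : ∀ x ∈ Icc u d, g2 b σ x ≤ cc * x⁻¹ := by
            intro x hx
            have hx0 : 0 < x := lt_of_lt_of_le hu.1 hx.1
            have hbB : x * b d ≤ Bf b x := Bge0 hcont hanti hdIcc ⟨hx0.le, hx.2⟩
            have hden2 : 0 < 2 * Bf b x := by nlinarith
            have hx1 : x ≤ 1 := le_trans hx.2 hdI.2.le
            have hrw : σ^2 / (2 * b d) * x⁻¹ = σ^2 / (2 * b d * x) := by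
              field_simp
            unfold g2
            rw [hcc_def, hrw, div_le_div_iff₀ hden2 (by positivity : (0:ℝ) < 2 * b d * x)]
            nlinarith [mul_le_mul_of_nonneg_left hbB (by positivity : (0:ℝ) ≤ 2 * σ^2),
              mul_nonneg (mul_nonneg (mul_nonneg hbdpos.le hx0.le) hx0.le) (sq_nonneg σ)]
          have hinv : IntervalIntegrable (fun x : ℝ => cc * x⁻¹) volume u d := by
            apply ContinuousOn.intervalIntegrable
            apply continuousOn_const.mul (ContinuousOn.inv₀ continuousOn_id ?_)
            intro x hx
            rw [uIcc_of_le hu.2] at hx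
            exact ne_of_gt (lt_of_lt_of_le hu.1 hx.1)
          calc (∫ v in u..d, g2 b σ v) ≤ ∫ x in u..d, cc * x⁻¹ :=
                integral_mono_on hu.2 hg2mid hinv hptw
            _ = cc * Real.log (d / u) := by
                rw [intervalIntegral.integral_const_mul, integral_inv_of_pos hu.1 hdI.1]
            _ = cc * (Real.log d - Real.log u) := by
                rw [Real.log_div (ne_of_gt hdI.1) (ne_of_gt hu.1)]
        have hCle : (∫ v in u..(1:ℝ), g2 b σ v) ≤ cc * (Real.log d - Real.log u) + Cd := by
          linarith
        have hrA : r * (∫ v in (0:ℝ)..u, g1 b σ v) ≤ 0 :=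
          mul_nonpos_of_nonpos_of_nonneg hrneg.le hA
        have hrC : (-r) * (∫ v in u..(1:ℝ), g2 b σ v)
            ≤ (-r) * (cc * (Real.log d - Real.log u) + Cd) :=
          mul_le_mul_of_nonneg_left hCle (by linarith)
        unfold Phi
        rw [he_def]
        nlinarith [hrC, hrA]
      set K := Real.exp ((-r) * (cc * Real.log d + Cd)) with hK_def
      have hdom : IntegrableOn (fun u : ℝ => K * u ^ e) (Ioc 0 d) volume :=
        ((intervalIntegral.intervalIntegrable_rpow' he (a := 0) (b := d)).const_mul K).1
      apply Integrable.mono' hdom hmeas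
      refine (ae_restrict_iff' measurableSet_Ioc).2 (Filter.Eventually.of_forall fun u hu => ?_)
      rw [Real.norm_eq_abs, Real.abs_exp]
      calc Real.exp (r * Phi b σ u)
          ≤ Real.exp ((-r) * (cc * Real.log d + Cd) + e * Real.log u) :=
            Real.exp_le_exp.2 (hkey u hu)
        _ = K * u ^ e := by
            rw [Real.exp_add, hK_def, Real.rpow_def_of_pos hu.1, mul_comm (Real.log u) e]
  have hsub : Ioc (0:ℝ) (1/2) ⊆ Ioc 0 d ∪ Ioc d (1/2) := by
    rw [Ioc_union_Ioc_eq_Ioc hd.1.le hd.2]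
  exact (hnear.union hmid).mono_set hsub


lemma Bf_reflect (hcont : ContinuousOn b (Set.Icc 0 1)) (hB1 : ∫ v in (0:ℝ)..1, b v = 0)
    {v : ℝ} (hv : v ∈ Icc (0:ℝ) 1) : Bf (fun w => -b (1 - w)) v = Bf b (1 - v) := by
  have h1v : (1:ℝ) - v ∈ Icc (0:ℝ) 1 := ⟨by linarith [hv.2], by linarith [hv.1]⟩
  have hsp := Bsplit hcont hB1 h1v
  show (∫ w in (0:ℝ)..v, -b (1 - w)) = Bf b (1 - v)
  rw [intervalIntegral.integral_neg, intervalIntegral.integral_comp_sub_left (fun w => b w) 1,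
    show (1:ℝ) - 0 = 1 by norm_num, hsp]

lemma phi_reflect (hcont : ContinuousOn b (Set.Icc 0 1)) (hB1 : ∫ v in (0:ℝ)..1, b v = 0)
    {u : ℝ} (hu : u ∈ Icc (0:ℝ) 1) :
    Phi (fun w => -b (1 - w)) σ u = - Phi b σ (1 - u) := by
  have e1 : (∫ v in (0:ℝ)..u, g1 (fun w => -b (1 - w)) σ v)
      = ∫ v in (0:ℝ)..u, g2 b σ (1 - v) := by
    apply intervalIntegral.integral_congr
    intro v hv
    rw [uIcc_of_le hu.1] at hv
    have hvI : v ∈ Icc (0:ℝ) 1 := ⟨hv.1, le_trans hv.2 hu.2⟩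
    simp [g1, g2, Bf_reflect hcont hB1 hvI, sub_sub_cancel]
  have e2 : (∫ v in u..(1:ℝ), g2 (fun w => -b (1 - w)) σ v)
      = ∫ v in u..(1:ℝ), g1 b σ (1 - v) := by
    apply intervalIntegral.integral_congr
    intro v hv
    rw [uIcc_of_le hu.2] at hv
    have hvI : v ∈ Icc (0:ℝ) 1 := ⟨le_trans hu.1 hv.1, hv.2⟩
    simp [g1, g2, Bf_reflect hcont hB1 hvI, sub_sub_cancel]
  unfold Phi
  rw [e1, e2, intervalIntegral.integral_comp_sub_left (g2 b σ) 1,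
    intervalIntegral.integral_comp_sub_left (g1 b σ) 1,
    show (1:ℝ) - 0 = 1 by norm_num, show (1:ℝ) - 1 = 0 by norm_num]
  ring

end Stmt10Aux

open Stmt10Aux in
theorem stmt_10 (b : ℝ → ℝ) (σ : ℝ) (hσ : σ ≠ 0)
    (hcont : ContinuousOn b (Set.Icc 0 1))
    (hanti : StrictAntiOn b (Set.Icc 0 1))
    (hB1 : ∫ v in (0:ℝ)..1, b v = 0)
    (Φ : ℝ → ℝ)
    (hΦ : ∀ u, Φ u = (∫ v in (0:ℝ)..u, v * σ^2 / (2 * ∫ w in (0:ℝ)..v, b w))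
        - ∫ v in u..(1:ℝ), (1 - v) * σ^2 / (2 * ∫ w in (0:ℝ)..v, b w))
    (P : Measure ℝ)
    (hP : P = Measure.map Φ (volume.restrict (Set.Ioo 0 1)))
    (r : ℝ) (hr : r ∈ Set.Ioo (-2 * b 0 / σ^2) (-2 * b 1 / σ^2)) :
    MeasureTheory.Integrable (fun x : ℝ => Real.exp (r * x)) P ∧
    (∫ x, Real.exp (r * x) ∂P) = ∫ u in (0:ℝ)..1, Real.exp (r * Φ u) := by
  have hσ2 : 0 < σ^2 := by positivity
  have hΦeq : Φ = Phi b σ := by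
    funext u
    rw [hΦ u]
    rfl
  -- left half integrability
  have hL : IntegrableOn (fun u => Real.exp (r * Phi b σ u)) (Set.Ioc 0 (1/2)) volume :=
    half hσ hcont hanti hB1 hr.1
  -- reflected data
  set bb : ℝ → ℝ := fun w => -b (1 - w) with hbb_def
  have hmaps : Set.MapsTo (fun x : ℝ => 1 - x) (Set.Icc 0 1) (Set.Icc 0 1) :=
    fun x hx => ⟨by show (0:ℝ) ≤ 1 - x; linarith [hx.2], by show (1:ℝ) - x ≤ 1; linarith [hx.1]⟩
  have hcontR : ContinuousOn bb (Set.Icc 0 1) :=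
    (hcont.comp ((continuous_const.sub continuous_id).continuousOn) hmaps).neg
  have hantiR : StrictAntiOn bb (Set.Icc 0 1) := by
    intro x hx y hy hxy
    have h1 : (1:ℝ) - y ∈ Set.Icc (0:ℝ) 1 := ⟨by linarith [hy.2], by linarith [hy.1]⟩
    have h2 : (1:ℝ) - x ∈ Set.Icc (0:ℝ) 1 := ⟨by linarith [hx.2], by linarith [hx.1]⟩
    have := hanti h1 h2 (by linarith)
    simp only [hbb_def]
    linarith
  have hB1R : ∫ v in (0:ℝ)..1, bb v = 0 := by
    show (∫ v in (0:ℝ)..1, -b (1 - v)) = 0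
    rw [intervalIntegral.integral_neg, intervalIntegral.integral_comp_sub_left (fun w => b w) 1]
    norm_num [hB1]
  have hr0R : -2 * bb 0 / σ^2 < -r := by
    have h2 : r < -2 * b 1 / σ^2 := hr.2
    rw [lt_div_iff₀ hσ2] at h2
    have hbb0 : bb 0 = -b 1 := by simp [hbb_def]
    rw [hbb0, div_lt_iff₀ hσ2]
    linarith
  have hLR : IntegrableOn (fun u => Real.exp (-r * Phi bb σ u)) (Set.Ioc 0 (1/2)) volume :=
    half hσ hcontR hantiR hB1R hr0R
  have hLR2 : IntegrableOn (fun u => Real.exp (r * Phi b σ (1 - u))) (Set.Ioc 0 (1/2))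
      volume := by
    apply hLR.congr_fun ?_ measurableSet_Ioc
    intro u hu
    have huI : u ∈ Set.Icc (0:ℝ) 1 := ⟨hu.1.le, le_trans hu.2 (by norm_num)⟩
    simp only [hbb_def]
    rw [phi_reflect hcont hB1 huI]
    ring_nf
  have hII : IntervalIntegrable (fun u => Real.exp (r * Phi b σ (1 - u))) volume 0 (1/2) :=
    (intervalIntegrable_iff_integrableOn_Ioc_of_le (by norm_num)).2 hLR2
  have hII2 := hII.comp_sub_left 1
  have hR : IntegrableOn (fun u => Real.exp (r * Phi b σ u)) (Set.Ioc (1/2) 1) volume := by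
    have h := hII2.2
    rw [show (1:ℝ) - 0 = 1 by norm_num, show (1:ℝ) - 1/2 = 1/2 by norm_num] at h
    apply h.congr_fun ?_ measurableSet_Ioc
    intro u _
    simp [sub_sub_cancel]
  have hfull : IntegrableOn (fun u => Real.exp (r * Phi b σ u)) (Set.Ioo 0 1) volume := by
    apply (hL.union hR).mono_set
    intro x hx
    rcases le_or_gt x (1/2) with h | h
    · exact Or.inl ⟨hx.1, h⟩
    · exact Or.inr ⟨h, hx.2.le⟩
  have hmeasΦ : AEMeasurable (Phi b σ) (volume.restrict (Set.Ioo 0 1)) :=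
    (contPhi hcont hanti hB1).aemeasurable measurableSet_Ioo
  have hexp : AEStronglyMeasurable (fun x : ℝ => Real.exp (r * x))
      (Measure.map (Phi b σ) (volume.restrict (Set.Ioo 0 1))) :=
    (Real.continuous_exp.comp (continuous_const.mul continuous_id)).aestronglyMeasurable
  subst hP
  rw [hΦeq]
  constructor
  · rw [integrable_map_measure hexp hmeasΦ]
    exact hfull
  · rw [MeasureTheory.integral_map hmeasΦ hexp,
      intervalIntegral.integral_of_le zero_le_one, MeasureTheory.integral_Ioc_eq_integral_Ioo]
end

section
/- Let α ∈ (0,1). Then for all integers 1 ≤ i ≤ m, the product ∏_{k=i}^{m} 1/(1 − α/k) is bounded by K(α)·(m/i)^α, where K(α) := exp(α + κ(α) α² π²/6) and κ(α) = 1/(2(1−α)²). -/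
open Real Finset

lemma aux_inv_le_exp {x : ℝ} (hx0 : 0 ≤ x) (hx1 : x < 1) :
    (1 - x)⁻¹ ≤ Real.exp (x + x^2 / (2 * (1 - x))) := by
  have h1x : 0 < 1 - x := by linarith
  have hc0 : 0 ≤ x^2 / (2 * (1 - x)) := by positivity
  have hy0 : 0 ≤ x + x^2 / (2 * (1 - x)) := by linarith
  have hq := Real.quadratic_le_exp_of_nonneg hy0
  have hd : x^2 / (2 * (1 - x)) * (2 * (1 - x)) = x^2 :=
    div_mul_cancel₀ _ (by positivity)
  have key : (1 - x)⁻¹ ≤ 1 + (x + x^2 / (2 * (1 - x)))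
      + (x + x^2 / (2 * (1 - x)))^2 / 2 := by
    rw [inv_le_iff_one_le_mul₀' h1x]
    nlinarith [sq_nonneg (x^2 / (2 * (1 - x))), mul_nonneg h1x.le (sq_nonneg (x^2 / (2 * (1 - x))))]
  linarith

lemma aux_inv_le_exp2 {α x : ℝ} (hα1 : α < 1) (hx0 : 0 ≤ x) (hxα : x ≤ α) :
    (1 - x)⁻¹ ≤ Real.exp (x + (1 / (2 * (1 - α)^2)) * x^2) := by
  have hx1 : x < 1 := lt_of_le_of_lt hxα hα1
  have h1x : 0 < 1 - x := by linarith
  have h1α : 0 < 1 - α := by linarith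
  refine (aux_inv_le_exp hx0 hx1).trans (Real.exp_le_exp.mpr ?_)
  have hle : 2 * (1 - α)^2 ≤ 2 * (1 - x) := by nlinarith
  have h2 : 0 < 2 * (1 - α)^2 := by nlinarith
  have := one_div_le_one_div_of_le h2 hle
  have hx2 : (0:ℝ) ≤ x^2 := sq_nonneg x
  have := mul_le_mul_of_nonneg_left this hx2
  have e1 : x^2 / (2 * (1 - x)) = x^2 * (1 / (2 * (1 - x))) := by ring
  have e2 : (1 / (2 * (1 - α)^2)) * x^2 = x^2 * (1 / (2 * (1 - α)^2)) := by ring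
  rw [e1, e2]
  linarith

lemma aux_harmonic (i : ℕ) (hi : 1 ≤ i) (m : ℕ) (him : i ≤ m) :
    ∑ k ∈ Finset.Icc i m, (1 / (k:ℝ)) ≤ 1 + Real.log m - Real.log i := by
  induction m, him using Nat.le_induction with
  | base =>
    simp only [Finset.Icc_self, Finset.sum_singleton, sub_self]
    have hi0 : (0:ℝ) < (i:ℝ) := by exact_mod_cast hi
    have h1 : (1:ℝ)/(i:ℝ) ≤ 1 := by
      rw [div_le_one hi0]; exact_mod_cast hi
    linarith
  | succ n hn ih =>
    have hn0 : (0:ℝ) < (n:ℝ) := by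
      have : (1:ℕ) ≤ n := le_trans hi hn
      exact_mod_cast this
    have hstep : (1:ℝ)/((n:ℝ)+1) ≤ Real.log ((n:ℝ)+1) - Real.log n := by
      have h1 : Real.log ((n:ℝ)/((n:ℝ)+1)) ≤ (n:ℝ)/((n:ℝ)+1) - 1 :=
        Real.log_le_sub_one_of_pos (by positivity)
      have h2 : Real.log ((n:ℝ)/((n:ℝ)+1)) = Real.log n - Real.log ((n:ℝ)+1) := by
        rw [Real.log_div (ne_of_gt hn0) (by positivity)]
      have h3 : (n:ℝ)/((n:ℝ)+1) - 1 = -(1/((n:ℝ)+1)) := by field_simp; ring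
      rw [h2, h3] at h1
      linarith
    rw [Finset.sum_Icc_succ_top (by omega)]
    push_cast
    push_cast at ih hstep
    linarith

lemma aux_basel (i m : ℕ) :
    ∑ k ∈ Finset.Icc i m, (1 / (k:ℝ)^2) ≤ Real.pi^2 / 6 := by
  have hs : HasSum (fun n : ℕ => (1:ℝ) / (n:ℝ)^2) (Real.pi^2/6) := hasSum_zeta_two
  have := Summable.sum_le_tsum (Finset.Icc i m) (fun n _ => by positivity) hs.summable
  rwa [hs.tsum_eq] at this

theorem stmt_14 (α : ℝ) (hα : α ∈ Set.Ioo (0:ℝ) 1) (i m : ℕ) (hi : 1 ≤ i) (him : i ≤ m) :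
    (∏ k ∈ Finset.Icc i m, (1 - α / (k:ℝ))⁻¹)
      ≤ Real.exp (α + (1 / (2 * (1 - α)^2)) * α^2 * Real.pi^2 / 6) * ((m:ℝ) / (i:ℝ)) ^ α := by
  obtain ⟨hα0, hα1⟩ := hα
  set κ : ℝ := 1 / (2 * (1 - α)^2) with hκ
  have h1α : 0 < 1 - α := by linarith
  have hκ0 : 0 < κ := by rw [hκ]; apply div_pos one_pos; nlinarith
  have hkpos : ∀ k ∈ Finset.Icc i m, (0:ℝ) < (k:ℝ) ∧ α / (k:ℝ) ≤ α := by
    intro k hk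
    simp only [Finset.mem_Icc] at hk
    have hk1 : 1 ≤ k := le_trans hi hk.1
    have hk0 : (0:ℝ) < (k:ℝ) := by exact_mod_cast hk1
    refine ⟨hk0, ?_⟩
    rw [div_le_iff₀ hk0]
    nlinarith [(show (1:ℝ) ≤ (k:ℝ) by exact_mod_cast hk1)]
  have hpt : ∀ k ∈ Finset.Icc i m, (1 - α / (k:ℝ))⁻¹ ≤
      Real.exp (α * (1/(k:ℝ)) + κ * α^2 * (1/(k:ℝ)^2)) := by
    intro k hk
    obtain ⟨hk0, hxα⟩ := hkpos k hk
    have hx0 : 0 ≤ α / (k:ℝ) := by positivity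
    have h1 := aux_inv_le_exp2 hα1 hx0 hxα
    have he : α / (k:ℝ) + (1 / (2 * (1 - α)^2)) * (α / (k:ℝ))^2
        = α * (1/(k:ℝ)) + κ * α^2 * (1/(k:ℝ)^2) := by
      rw [hκ]; ring
    rwa [he] at h1
  have hprod : (∏ k ∈ Finset.Icc i m, (1 - α / (k:ℝ))⁻¹)
      ≤ ∏ k ∈ Finset.Icc i m, Real.exp (α * (1/(k:ℝ)) + κ * α^2 * (1/(k:ℝ)^2)) := by
    apply Finset.prod_le_prod _ hpt
    intro k hk
    obtain ⟨hk0, hxα⟩ := hkpos k hk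
    have : 0 < 1 - α / (k:ℝ) := by linarith
    positivity
  rw [← Real.exp_sum] at hprod
  have hsum : ∑ k ∈ Finset.Icc i m, (α * (1/(k:ℝ)) + κ * α^2 * (1/(k:ℝ)^2))
      ≤ α * (1 + Real.log m - Real.log i) + κ * α^2 * (Real.pi^2/6) := by
    rw [Finset.sum_add_distrib, ← Finset.mul_sum, ← Finset.mul_sum]
    have h1 := aux_harmonic i hi m him
    have h2 := aux_basel i m
    have h3 := mul_le_mul_of_nonneg_left h1 hα0.le
    have h4 := mul_le_mul_of_nonneg_left h2 (by positivity : (0:ℝ) ≤ κ * α^2)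
    linarith
  have hexp := Real.exp_le_exp.mpr hsum
  have hi0 : (0:ℝ) < (i:ℝ) := by exact_mod_cast hi
  have hm0 : (0:ℝ) < (m:ℝ) := by exact_mod_cast le_trans hi him
  have hmi : (0:ℝ) < (m:ℝ)/(i:ℝ) := by positivity
  have hfinal : Real.exp (α * (1 + Real.log m - Real.log i) + κ * α^2 * (Real.pi^2/6))
      = Real.exp (α + κ * α^2 * Real.pi^2 / 6) * ((m:ℝ) / (i:ℝ)) ^ α := by
    rw [Real.rpow_def_of_pos hmi, Real.log_div (ne_of_gt hm0) (ne_of_gt hi0), ← Real.exp_add]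
    ring_nf
  calc (∏ k ∈ Finset.Icc i m, (1 - α / (k:ℝ))⁻¹)
      ≤ Real.exp (∑ k ∈ Finset.Icc i m, (α * (1/(k:ℝ)) + κ * α^2 * (1/(k:ℝ)^2))) := hprod
    _ ≤ Real.exp (α * (1 + Real.log m - Real.log i) + κ * α^2 * (Real.pi^2/6)) := hexp
    _ = Real.exp (α + κ * α^2 * Real.pi^2 / 6) * ((m:ℝ) / (i:ℝ)) ^ α := hfinal
end
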